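/- arXiv:2602.16172 — 5 statements merged into one kernel-verified Lean document; each statement's English description precedes it below -/
import Mathlib

section
/- Fix reals d₂ > 0, β > 0, S₀ > 0, μ₂ > 0 with βS₀/μ₂ > 1, and θ ∈ ℝ, and for c > 0 define Δ_c(λ) = d₂(e^{λ sin θ} + e^{−λ sin θ} + e^{λ cos θ} + e^{−λ cos θ} − 4) − cλ + βS₀ − μ₂. Then there exist c* > 0 and λ* > 0 such that Δ_{c*}(λ*) = 0 and the derivative of λ ↦ Δ_{c*}(λ) vanishes at λ*; moreover, λ* is the unique root of Δ_{c*}(λ) = 0 in (0, +∞). -/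
noncomputable def charDelta (d₂ β S₀ μ₂ θ c lam : ℝ) : ℝ :=
  d₂ * (Real.exp (lam * Real.sin θ) + Real.exp (-(lam * Real.sin θ)) +
        Real.exp (lam * Real.cos θ) + Real.exp (-(lam * Real.cos θ)) - 4) -
  c * lam + β * S₀ - μ₂

private lemma cosh_ge_two (x : ℝ) : 2 ≤ Real.exp x + Real.exp (-x) := by
  nlinarith [Real.add_one_le_exp x, Real.add_one_le_exp (-x)]

noncomputable def gfun (d₂ K s t lam : ℝ) : ℝ :=
  d₂ * (Real.exp (lam * s) + Real.exp (-(lam * s)) +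
        Real.exp (lam * t) + Real.exp (-(lam * t)) - 4) + K

noncomputable def gfun' (d₂ s t lam : ℝ) : ℝ :=
  d₂ * (s * Real.exp (lam * s) - s * Real.exp (-(lam * s)) +
        t * Real.exp (lam * t) - t * Real.exp (-(lam * t)))

noncomputable def gfun'' (d₂ s t lam : ℝ) : ℝ :=
  d₂ * (s ^ 2 * Real.exp (lam * s) + s ^ 2 * Real.exp (-(lam * s)) +
        t ^ 2 * Real.exp (lam * t) + t ^ 2 * Real.exp (-(lam * t)))

private lemma hasDerivAt_gfun (d₂ K s t lam : ℝ) :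
    HasDerivAt (gfun d₂ K s t) (gfun' d₂ s t lam) lam := by
  have h1 : HasDerivAt (fun l : ℝ => Real.exp (l * s)) (Real.exp (lam * s) * (1 * s)) lam :=
    ((hasDerivAt_id lam).mul_const s).exp
  have h2 : HasDerivAt (fun l : ℝ => Real.exp (-(l * s)))
      (Real.exp (-(lam * s)) * (-(1 * s))) lam :=
    ((hasDerivAt_id lam).mul_const s).neg.exp
  have h3 : HasDerivAt (fun l : ℝ => Real.exp (l * t)) (Real.exp (lam * t) * (1 * t)) lam :=
    ((hasDerivAt_id lam).mul_const t).exp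
  have h4 : HasDerivAt (fun l : ℝ => Real.exp (-(l * t)))
      (Real.exp (-(lam * t)) * (-(1 * t))) lam :=
    ((hasDerivAt_id lam).mul_const t).neg.exp
  have := (((((h1.add h2).add h3).add h4).sub_const 4).const_mul d₂).add_const K
  refine this.congr_deriv ?_
  simp only [gfun']
  ring

private lemma hasDerivAt_gfun' (d₂ s t lam : ℝ) :
    HasDerivAt (gfun' d₂ s t) (gfun'' d₂ s t lam) lam := by
  have h1 : HasDerivAt (fun l : ℝ => Real.exp (l * s)) (Real.exp (lam * s) * (1 * s)) lam :=
    ((hasDerivAt_id lam).mul_const s).exp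
  have h2 : HasDerivAt (fun l : ℝ => Real.exp (-(l * s)))
      (Real.exp (-(lam * s)) * (-(1 * s))) lam :=
    ((hasDerivAt_id lam).mul_const s).neg.exp
  have h3 : HasDerivAt (fun l : ℝ => Real.exp (l * t)) (Real.exp (lam * t) * (1 * t)) lam :=
    ((hasDerivAt_id lam).mul_const t).exp
  have h4 : HasDerivAt (fun l : ℝ => Real.exp (-(l * t)))
      (Real.exp (-(lam * t)) * (-(1 * t))) lam :=
    ((hasDerivAt_id lam).mul_const t).neg.exp
  have := ((((h1.const_mul s).sub (h2.const_mul s)).add (h3.const_mul t)).sub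
      (h4.const_mul t)).const_mul d₂
  refine this.congr_deriv ?_
  simp only [gfun'']
  ring

private lemma gfun''_ge (d₂ s t : ℝ) (hd₂ : 0 < d₂) (hst : s ^ 2 + t ^ 2 = 1) (lam : ℝ) :
    2 * d₂ ≤ gfun'' d₂ s t lam := by
  have c1 := cosh_ge_two (lam * s)
  have c2 := cosh_ge_two (lam * t)
  have hs : (0:ℝ) ≤ s ^ 2 := sq_nonneg s
  have ht : (0:ℝ) ≤ t ^ 2 := sq_nonneg t
  simp only [gfun'']
  nlinarith [mul_le_mul_of_nonneg_left c1 hs, mul_le_mul_of_nonneg_left c2 ht]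

private lemma gfun'_strictMono (d₂ s t : ℝ) (hd₂ : 0 < d₂) (hst : s ^ 2 + t ^ 2 = 1) :
    StrictMono (gfun' d₂ s t) := by
  apply strictMono_of_deriv_pos
  intro x
  rw [(hasDerivAt_gfun' d₂ s t x).deriv]
  linarith [gfun''_ge d₂ s t hd₂ hst x]

private lemma gfun_pos (d₂ K s t : ℝ) (hd₂ : 0 < d₂) (hK : 0 < K) (lam : ℝ) :
    0 < gfun d₂ K s t lam := by
  have c1 := cosh_ge_two (lam * s)
  have c2 := cosh_ge_two (lam * t)
  simp only [gfun]
  nlinarith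

theorem stmt_1 (d₂ β S₀ μ₂ θ : ℝ)
    (hd₂ : 0 < d₂) (hβ : 0 < β) (hS₀ : 0 < S₀) (hμ₂ : 0 < μ₂)
    (hR₀ : 1 < β * S₀ / μ₂) :
    ∃ cstar lamstar : ℝ, 0 < cstar ∧ 0 < lamstar ∧
      charDelta d₂ β S₀ μ₂ θ cstar lamstar = 0 ∧
      deriv (charDelta d₂ β S₀ μ₂ θ cstar) lamstar = 0 ∧
      ∀ lam : ℝ, 0 < lam → charDelta d₂ β S₀ μ₂ θ cstar lam = 0 → lam = lamstar := by
  set s := Real.sin θ with hs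
  set t := Real.cos θ with ht
  have hst : s ^ 2 + t ^ 2 = 1 := by
    rw [hs, ht]; exact Real.sin_sq_add_cos_sq θ
  set K := β * S₀ - μ₂ with hKdef
  have hK : 0 < K := by
    have h := (lt_div_iff₀ hμ₂).mp hR₀
    simp only [hKdef]
    linarith
  -- charDelta in terms of gfun
  have hchar : ∀ c lam, charDelta d₂ β S₀ μ₂ θ c lam = gfun d₂ K s t lam - c * lam := by
    intro c lam
    simp only [charDelta, gfun, hKdef, hs, ht]
    ring
  -- φ lam = lam * g'(lam) - g(lam)
  set φ : ℝ → ℝ := fun lam => lam * gfun' d₂ s t lam - gfun d₂ K s t lam with hφdef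
  have hφderiv : ∀ lam, HasDerivAt φ (lam * gfun'' d₂ s t lam) lam := by
    intro lam
    have h := ((hasDerivAt_id lam).mul (hasDerivAt_gfun' d₂ s t lam)).sub
      (hasDerivAt_gfun d₂ K s t lam)
    refine h.congr_deriv ?_
    simp only [id_eq]
    ring
  have hφ0 : φ 0 < 0 := by
    have := gfun_pos d₂ K s t hd₂ hK 0
    simp only [hφdef]
    nlinarith
  -- φ is eventually positive
  obtain ⟨Λ, hΛ1, h2d⟩ : ∃ L : ℝ, 1 < L ∧ 2 * d₂ * (L - 1) = 1 + |φ 1| := by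
    refine ⟨1 + (1 + |φ 1|) / (2 * d₂), ?_, ?_⟩
    · have h0 : 0 < (1 + |φ 1|) / (2 * d₂) := by positivity
      linarith
    · field_simp
      ring
  have hφΛ : 0 < φ Λ := by
    obtain ⟨ξ, hξ, hξeq⟩ := exists_hasDerivAt_eq_slope φ (fun x => x * gfun'' d₂ s t x) hΛ1
      (fun x _ => (hφderiv x).continuousAt.continuousWithinAt)
      (fun x _ => hφderiv x)
    have hξ1 : 1 < ξ := hξ.1
    have hbound : 2 * d₂ ≤ ξ * gfun'' d₂ s t ξ := by
      have h1 := gfun''_ge d₂ s t hd₂ hst ξ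
      nlinarith [gfun''_ge d₂ s t hd₂ hst ξ]
    rw [hξeq] at hbound
    have hΛpos : 0 < Λ - 1 := by linarith
    have : 2 * d₂ * (Λ - 1) ≤ φ Λ - φ 1 := by
      rw [le_div_iff₀ hΛpos] at hbound
      linarith
    have habs : -|φ 1| ≤ φ 1 := neg_abs_le _
    nlinarith
  -- IVT to find lamstar with φ lamstar = 0
  have hcont : ContinuousOn φ (Set.Icc 0 Λ) :=
    fun x _ => (hφderiv x).continuousAt.continuousWithinAt
  have h0Λ : (0:ℝ) ≤ Λ := by linarith
  have hmem : (0:ℝ) ∈ Set.Icc (φ 0) (φ Λ) := ⟨le_of_lt hφ0, le_of_lt hφΛ⟩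
  obtain ⟨lamstar, hlammem, hlameq⟩ := intermediate_value_Icc h0Λ hcont hmem
  have hlampos : 0 < lamstar := by
    rcases lt_or_eq_of_le hlammem.1 with h | h
    · exact h
    · exfalso; rw [← h] at hlameq; linarith
  set cstar := gfun' d₂ s t lamstar with hcdef
  have hgc : gfun d₂ K s t lamstar = cstar * lamstar := by
    have : lamstar * gfun' d₂ s t lamstar - gfun d₂ K s t lamstar = 0 := hlameq
    rw [hcdef]; linarith [this]
  have hcpos : 0 < cstar := by
    have hg := gfun_pos d₂ K s t hd₂ hK lamstar
    rw [hgc] at hg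
    by_contra h
    push_neg at h
    nlinarith
  refine ⟨cstar, lamstar, hcpos, hlampos, ?_, ?_, ?_⟩
  · rw [hchar, hgc]; ring
  · have heq : charDelta d₂ β S₀ μ₂ θ cstar = fun l => gfun d₂ K s t l - cstar * l :=
      funext (hchar cstar)
    have hD : HasDerivAt (charDelta d₂ β S₀ μ₂ θ cstar)
        (gfun' d₂ s t lamstar - cstar) lamstar := by
      rw [heq]
      have h := (hasDerivAt_gfun d₂ K s t lamstar).sub
        ((hasDerivAt_id lamstar).const_mul cstar)
      refine h.congr_deriv ?_
      simp [id_eq]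
    rw [hD.deriv, hcdef]
    ring
  · intro lam hlam hzero
    have heq : charDelta d₂ β S₀ μ₂ θ cstar = fun l => gfun d₂ K s t l - cstar * l :=
      funext (hchar cstar)
    have hΔderiv : ∀ x : ℝ, HasDerivAt (charDelta d₂ β S₀ μ₂ θ cstar)
        (gfun' d₂ s t x - cstar) x := by
      intro x
      rw [heq]
      have h := (hasDerivAt_gfun d₂ K s t x).sub ((hasDerivAt_id x).const_mul cstar)
      refine h.congr_deriv ?_
      simp [id_eq]
    have hΔstar : charDelta d₂ β S₀ μ₂ θ cstar lamstar = 0 := by rw [hchar, hgc]; ring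
    by_contra hne
    rcases lt_or_gt_of_ne hne with hlt | hgt
    · -- lam < lamstar
      obtain ⟨ξ, hξ, hξeq⟩ := exists_hasDerivAt_eq_slope (charDelta d₂ β S₀ μ₂ θ cstar)
        (fun x => gfun' d₂ s t x - cstar) hlt
        (fun x _ => (hΔderiv x).continuousAt.continuousWithinAt)
        (fun x _ => hΔderiv x)
      rw [hzero, hΔstar] at hξeq
      simp only [sub_self, zero_div] at hξeq
      have hmono := gfun'_strictMono d₂ s t hd₂ hst hξ.2
      rw [← hcdef] at hmono
      linarith [hξeq]
    · -- lamstar < lam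
      obtain ⟨ξ, hξ, hξeq⟩ := exists_hasDerivAt_eq_slope (charDelta d₂ β S₀ μ₂ θ cstar)
        (fun x => gfun' d₂ s t x - cstar) hgt
        (fun x _ => (hΔderiv x).continuousAt.continuousWithinAt)
        (fun x _ => hΔderiv x)
      rw [hzero, hΔstar] at hξeq
      simp only [sub_self, zero_div] at hξeq
      have hmono := gfun'_strictMono d₂ s t hd₂ hst hξ.1
      rw [← hcdef] at hmono
      linarith [hξeq]
end

section
/- Let Λ, β, α, μ₁, μ₂, d₂ > 0, θ ∈ ℝ, S₀ = Λ/μ₁, and assume βS₀/μ₂ > 1. Let c > c* (the critical speed) and let λ₁ denote the smaller positive root of Δ_c(λ) = d₂(e^{λ sin θ} + e^{−λ sin θ} + e^{λ cos θ} + e^{−λ cos θ} − 4) − cλ + βS₀ − μ₂ = 0. Fix I₀ ≥ (βS₀ − μ₂)/(αμ₂) and define I⁺(ξ) = min{e^{λ₁ξ}, I₀}. Then for every ξ ≠ (1/λ₁)·ln I₀, c·(I⁺)'(ξ) ≥ d₂𝔍[I⁺](ξ) + βS₀I⁺(ξ)/(1 + αI⁺(ξ)) − μ₂I⁺(ξ),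 where 𝔍[φ](ξ) = φ(ξ + sin θ) + φ(ξ − sin θ) + φ(ξ + cos θ) + φ(ξ − cos θ) − 4φ(ξ). -/
/-- Discrete Laplacian in direction `θ`. -/
noncomputable def lap (θ : ℝ) (φ : ℝ → ℝ) (ξ : ℝ) : ℝ :=
  φ (ξ + Real.sin θ) + φ (ξ - Real.sin θ) + φ (ξ + Real.cos θ) + φ (ξ - Real.cos θ) - 4 * φ ξ

theorem stmt_5 (Λ β α μ₁ μ₂ d₂ θ : ℝ)
    (hΛ : 0 < Λ) (hβ : 0 < β) (hα : 0 < α) (hμ₁ : 0 < μ₁) (hμ₂ : 0 < μ₂) (hd₂ : 0 < d₂)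
    (S₀ : ℝ) (hS₀ : S₀ = Λ / μ₁) (hR₀ : 1 < β * S₀ / μ₂)
    (cstar lamstar c lam₁ : ℝ)
    (hcstar : 0 < cstar) (hlamstar : 0 < lamstar)
    (hcritroot : charDelta d₂ β S₀ μ₂ θ cstar lamstar = 0)
    (hcritderiv : deriv (charDelta d₂ β S₀ μ₂ θ cstar) lamstar = 0)
    (hc : cstar < c)
    (hlam₁ : 0 < lam₁) (hroot : charDelta d₂ β S₀ μ₂ θ c lam₁ = 0)
    (hsmallest : ∀ lam : ℝ, 0 < lam → charDelta d₂ β S₀ μ₂ θ c lam = 0 → lam₁ ≤ lam)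
    (I₀ : ℝ) (hI₀ : (β * S₀ - μ₂) / (α * μ₂) ≤ I₀)
    (Iplus : ℝ → ℝ) (hIplus : ∀ ξ, Iplus ξ = min (Real.exp (lam₁ * ξ)) I₀) :
    ∀ ξ : ℝ, ξ ≠ (1 / lam₁) * Real.log I₀ →
      d₂ * lap θ Iplus ξ + β * S₀ * Iplus ξ / (1 + α * Iplus ξ) - μ₂ * Iplus ξ
        ≤ c * deriv Iplus ξ := by

  intro ξ hξ
  have hμβ : μ₂ < β * S₀ := by
    have := (one_lt_div hμ₂).mp hR₀
    linarith
  have hS₀pos : 0 < S₀ := by rw [hS₀]; positivity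
  have hI₀pos : 0 < I₀ :=
    lt_of_lt_of_le (div_pos (by linarith) (mul_pos hα hμ₂)) hI₀
  have hle1 : ∀ x, Iplus x ≤ Real.exp (lam₁ * x) := fun x => (hIplus x) ▸ min_le_left _ _
  have hle2 : ∀ x, Iplus x ≤ I₀ := fun x => (hIplus x) ▸ min_le_right _ _
  rcases lt_or_gt_of_ne hξ with h | h
  · -- ξ < ξ₀ : Iplus = exp near ξ
    have hlt : ∀ x, x < (1 / lam₁) * Real.log I₀ → Real.exp (lam₁ * x) < I₀ := by
      intro x hx
      rw [← Real.exp_log hI₀pos]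
      apply Real.exp_lt_exp.mpr
      have : lam₁ * x < lam₁ * ((1 / lam₁) * Real.log I₀) :=
        mul_lt_mul_of_pos_left hx hlam₁
      calc lam₁ * x < lam₁ * ((1 / lam₁) * Real.log I₀) := this
        _ = Real.log I₀ := by field_simp
    have hEq : Iplus =ᶠ[nhds ξ] (fun x => Real.exp (lam₁ * x)) := by
      filter_upwards [Iio_mem_nhds h] with x hx
      rw [hIplus x, min_eq_left (le_of_lt (hlt x hx))]
    have hd : deriv Iplus ξ = lam₁ * Real.exp (lam₁ * ξ) := by
      rw [hEq.deriv_eq]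
      have h1 : HasDerivAt (fun x : ℝ => Real.exp (lam₁ * x))
          (Real.exp (lam₁ * ξ) * (lam₁ * 1)) ξ :=
        (Real.hasDerivAt_exp _).comp ξ ((hasDerivAt_id ξ).const_mul lam₁)
      rw [h1.deriv]; ring
    have hIξ : Iplus ξ = Real.exp (lam₁ * ξ) := by
      rw [hIplus ξ, min_eq_left (le_of_lt (hlt ξ h))]
    have hEpos : 0 < Real.exp (lam₁ * ξ) := Real.exp_pos _
    have hfrac : β * S₀ * Iplus ξ / (1 + α * Iplus ξ) ≤ β * S₀ * Iplus ξ := by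
      apply div_le_self
      · rw [hIξ]; exact le_of_lt (mul_pos (mul_pos hβ hS₀pos) hEpos)
      · rw [hIξ]; nlinarith [mul_pos hα hEpos]
    have hr : d₂ * (Real.exp (lam₁ * Real.sin θ) + Real.exp (-(lam₁ * Real.sin θ)) +
        Real.exp (lam₁ * Real.cos θ) + Real.exp (-(lam₁ * Real.cos θ)) - 4)
        = c * lam₁ - β * S₀ + μ₂ := by
      unfold charDelta at hroot; linarith
    have e1 : Real.exp (lam₁ * (ξ + Real.sin θ)) =
        Real.exp (lam₁ * ξ) * Real.exp (lam₁ * Real.sin θ) := by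
      rw [← Real.exp_add]; ring_nf
    have e2 : Real.exp (lam₁ * (ξ - Real.sin θ)) =
        Real.exp (lam₁ * ξ) * Real.exp (-(lam₁ * Real.sin θ)) := by
      rw [← Real.exp_add]; ring_nf
    have e3 : Real.exp (lam₁ * (ξ + Real.cos θ)) =
        Real.exp (lam₁ * ξ) * Real.exp (lam₁ * Real.cos θ) := by
      rw [← Real.exp_add]; ring_nf
    have e4 : Real.exp (lam₁ * (ξ - Real.cos θ)) =
        Real.exp (lam₁ * ξ) * Real.exp (-(lam₁ * Real.cos θ)) := by
      rw [← Real.exp_add]; ring_nf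
    have b1 := hle1 (ξ + Real.sin θ)
    have b2 := hle1 (ξ - Real.sin θ)
    have b3 := hle1 (ξ + Real.cos θ)
    have b4 := hle1 (ξ - Real.cos θ)
    rw [e1] at b1; rw [e2] at b2; rw [e3] at b3; rw [e4] at b4
    have key : d₂ * (Real.exp (lam₁ * ξ) * Real.exp (lam₁ * Real.sin θ) +
        Real.exp (lam₁ * ξ) * Real.exp (-(lam₁ * Real.sin θ)) +
        Real.exp (lam₁ * ξ) * Real.exp (lam₁ * Real.cos θ) +
        Real.exp (lam₁ * ξ) * Real.exp (-(lam₁ * Real.cos θ)) - 4 * Real.exp (lam₁ * ξ))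
        = (c * lam₁ - β * S₀ + μ₂) * Real.exp (lam₁ * ξ) := by
      linear_combination Real.exp (lam₁ * ξ) * hr
    rw [hIξ] at hfrac
    unfold lap
    rw [hd, hIξ]
    linarith [mul_le_mul_of_nonneg_left b1 hd₂.le, mul_le_mul_of_nonneg_left b2 hd₂.le,
      mul_le_mul_of_nonneg_left b3 hd₂.le, mul_le_mul_of_nonneg_left b4 hd₂.le, hfrac, key]
  · -- ξ > ξ₀ : Iplus = I₀ near ξ
    have hge : ∀ x, (1 / lam₁) * Real.log I₀ < x → I₀ ≤ Real.exp (lam₁ * x) := by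
      intro x hx
      rw [← Real.exp_log hI₀pos]
      apply Real.exp_le_exp.mpr
      have : lam₁ * ((1 / lam₁) * Real.log I₀) < lam₁ * x :=
        mul_lt_mul_of_pos_left hx hlam₁
      have h2 : lam₁ * ((1 / lam₁) * Real.log I₀) = Real.log I₀ := by field_simp
      linarith
    have hEq : Iplus =ᶠ[nhds ξ] (fun _ => I₀) := by
      filter_upwards [Ioi_mem_nhds h] with x hx
      rw [hIplus x, min_eq_right (hge x hx)]
    have hd : deriv Iplus ξ = 0 := by rw [hEq.deriv_eq]; exact deriv_const _ _
    have hIξ : Iplus ξ = I₀ := by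
      rw [hIplus ξ, min_eq_right (hge ξ h)]
    have hfrac : β * S₀ * I₀ / (1 + α * I₀) ≤ μ₂ * I₀ := by
      rw [div_le_iff₀ (by nlinarith [mul_pos hα hI₀pos])]
      have := (div_le_iff₀ (mul_pos hα hμ₂)).mp hI₀
      nlinarith [hI₀pos]
    have b1 := hle2 (ξ + Real.sin θ)
    have b2 := hle2 (ξ - Real.sin θ)
    have b3 := hle2 (ξ + Real.cos θ)
    have b4 := hle2 (ξ - Real.cos θ)
    unfold lap
    rw [hd, hIξ]
    linarith [mul_le_mul_of_nonneg_left b1 hd₂.le, mul_le_mul_of_nonneg_left b2 hd₂.le,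
      mul_le_mul_of_nonneg_left b3 hd₂.le, mul_le_mul_of_nonneg_left b4 hd₂.le, hfrac]
end

section
/- Let Λ, β, α, μ₁, μ₂, d₁, d₂ > 0, θ ∈ ℝ, S₀ = Λ/μ₁, βS₀/μ₂ > 1, c > c*, and let λ₁ be the smaller positive root of Δ_c. Fix I₀ ≥ (βS₀ − μ₂)/(αμ₂) and set I⁺(ξ) = min{e^{λ₁ξ}, I₀}. Then there exist ε₁ ∈ (0, λ₁) and M₁ > 1 such that the function S⁻(ξ) = max{S₀(1 − M₁e^{ε₁ξ}), 0} satisfies, for every ξ ≠ (1/ε₁)·ln(1/M₁), the inequality c·(S⁻)'(ξ) ≤ d₁𝔍[S⁻](ξ) + Λ − βS⁻(ξ)I⁺(ξ)/(1 + αI⁺(ξ)) − μ₁S⁻(ξ), where 𝔍[φ](ξ) = φ(ξ + sin θ) + φ(ξ − sin θ) + φ(ξ + cos θ) + φ(ξ − cos θ) − 4φ(ξ). -/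
set_option maxHeartbeats 1600000 in
theorem stmt_6 (Λ β α μ₁ μ₂ d₁ d₂ θ : ℝ)
    (hΛ : 0 < Λ) (hβ : 0 < β) (hα : 0 < α) (hμ₁ : 0 < μ₁) (hμ₂ : 0 < μ₂)
    (hd₁ : 0 < d₁) (hd₂ : 0 < d₂)
    (S₀ : ℝ) (hS₀ : S₀ = Λ / μ₁) (hR₀ : 1 < β * S₀ / μ₂)
    (cstar lamstar c lam₁ : ℝ)
    (hcstar : 0 < cstar) (hlamstar : 0 < lamstar)
    (hcritroot : charDelta d₂ β S₀ μ₂ θ cstar lamstar = 0)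
    (hcritderiv : deriv (charDelta d₂ β S₀ μ₂ θ cstar) lamstar = 0)
    (hc : cstar < c)
    (hlam₁ : 0 < lam₁) (hroot : charDelta d₂ β S₀ μ₂ θ c lam₁ = 0)
    (hsmallest : ∀ lam : ℝ, 0 < lam → charDelta d₂ β S₀ μ₂ θ c lam = 0 → lam₁ ≤ lam)
    (I₀ : ℝ) (hI₀ : (β * S₀ - μ₂) / (α * μ₂) ≤ I₀)
    (Iplus : ℝ → ℝ) (hIplus : ∀ ξ, Iplus ξ = min (Real.exp (lam₁ * ξ)) I₀) :
    ∃ ε₁ M₁ : ℝ, 0 < ε₁ ∧ ε₁ < lam₁ ∧ 1 < M₁ ∧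
      ∀ ξ : ℝ, ξ ≠ (1 / ε₁) * Real.log (1 / M₁) →
        c * deriv (fun x => max (S₀ * (1 - M₁ * Real.exp (ε₁ * x))) 0) ξ ≤
          d₁ * lap θ (fun x => max (S₀ * (1 - M₁ * Real.exp (ε₁ * x))) 0) ξ + Λ
            - β * max (S₀ * (1 - M₁ * Real.exp (ε₁ * ξ))) 0 * Iplus ξ / (1 + α * Iplus ξ)
            - μ₁ * max (S₀ * (1 - M₁ * Real.exp (ε₁ * ξ))) 0 := by
  have hS₀pos : 0 < S₀ := by rw [hS₀]; positivity
  have hcpos : 0 < c := lt_trans hcstar hc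
  have hβS : μ₂ < β * S₀ := by
    have := (lt_div_iff₀ hμ₂).mp hR₀
    linarith
  have hI₀pos : 0 < I₀ := by
    have h2 : 0 < (β * S₀ - μ₂) / (α * μ₂) := div_pos (by linarith) (by positivity)
    linarith
  -- choose ε₁ small via continuity
  have hev : ∀ᶠ ε in nhds (0:ℝ),
      d₁ * (Real.exp (ε * Real.sin θ) + Real.exp (-(ε * Real.sin θ)) +
        Real.exp (ε * Real.cos θ) + Real.exp (-(ε * Real.cos θ)) - 4) < μ₁ := by
    have hcont : ContinuousAt (fun ε : ℝ => d₁ * (Real.exp (ε * Real.sin θ) +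
        Real.exp (-(ε * Real.sin θ)) + Real.exp (ε * Real.cos θ) +
        Real.exp (-(ε * Real.cos θ)) - 4)) 0 := by fun_prop
    have h0 : d₁ * (Real.exp ((0:ℝ) * Real.sin θ) + Real.exp (-((0:ℝ) * Real.sin θ)) +
        Real.exp ((0:ℝ) * Real.cos θ) + Real.exp (-((0:ℝ) * Real.cos θ)) - 4) = 0 := by
      norm_num
    have ht := hcont.tendsto
    rw [h0] at ht
    exact ht.eventually_lt_const hμ₁
  obtain ⟨δ, hδpos, hδ⟩ := Metric.eventually_nhds_iff.mp hev
  set ε₁ := min (δ/2) (lam₁/2) with hε₁def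
  have hε₁pos : 0 < ε₁ := lt_min (by linarith) (by linarith)
  have hε₁lt : ε₁ < lam₁ := lt_of_le_of_lt (min_le_right _ _) (by linarith)
  have hfε : d₁ * (Real.exp (ε₁ * Real.sin θ) + Real.exp (-(ε₁ * Real.sin θ)) +
      Real.exp (ε₁ * Real.cos θ) + Real.exp (-(ε₁ * Real.cos θ)) - 4) < μ₁ := by
    apply hδ
    rw [Real.dist_eq, sub_zero, abs_of_pos hε₁pos]
    exact lt_of_le_of_lt (min_le_left _ _) (by linarith)
  set K := Real.exp (ε₁ * Real.sin θ) + Real.exp (-(ε₁ * Real.sin θ)) +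
      Real.exp (ε₁ * Real.cos θ) + Real.exp (-(ε₁ * Real.cos θ)) - 4 with hK
  have hden : 0 < μ₁ - d₁ * K := by linarith
  set M₁ := max 2 (β / (μ₁ - d₁ * K)) with hM₁def
  have hM₁gt : 1 < M₁ := lt_of_lt_of_le one_lt_two (le_max_left _ _)
  have hM₁pos : 0 < M₁ := by linarith
  have hMβ : β ≤ M₁ * (μ₁ - d₁ * K) := by
    have h := le_max_right 2 (β / (μ₁ - d₁ * K))
    exact (div_le_iff₀ hden).mp h
  refine ⟨ε₁, M₁, hε₁pos, hε₁lt, hM₁gt, ?_⟩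
  intro ξ hξ
  set ξstar := (1/ε₁) * Real.log (1/M₁) with hξstar
  have hLneg : Real.log (1/M₁) < 0 :=
    Real.log_neg (by positivity) ((div_lt_one hM₁pos).mpr hM₁gt)
  have hξstarneg : ξstar < 0 := mul_neg_of_pos_of_neg (by positivity) hLneg
  have hkeylt : ∀ x : ℝ, x < ξstar → M₁ * Real.exp (ε₁ * x) < 1 := by
    intro x hx
    have h1 : ε₁ * x < Real.log (1/M₁) := by
      have h2 := (mul_lt_mul_iff_right₀ hε₁pos).mpr hx
      calc ε₁ * x < ε₁ * ξstar := h2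
        _ = Real.log (1/M₁) := by rw [hξstar]; field_simp
    have h2 : Real.exp (ε₁ * x) < 1/M₁ := by
      rw [← Real.exp_log (show (0:ℝ) < 1/M₁ by positivity)]
      exact Real.exp_lt_exp.mpr h1
    calc M₁ * Real.exp (ε₁ * x) < M₁ * (1/M₁) := by
          exact mul_lt_mul_of_pos_left h2 hM₁pos
      _ = 1 := by field_simp
  have hkeygt : ∀ x : ℝ, ξstar < x → 1 < M₁ * Real.exp (ε₁ * x) := by
    intro x hx
    have h1 : Real.log (1/M₁) < ε₁ * x := by
      have h2 := (mul_lt_mul_iff_right₀ hε₁pos).mpr hx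
      calc Real.log (1/M₁) = ε₁ * ξstar := by rw [hξstar]; field_simp
        _ < ε₁ * x := h2
    have h2 : 1/M₁ < Real.exp (ε₁ * x) := by
      rw [← Real.exp_log (show (0:ℝ) < 1/M₁ by positivity)]
      exact Real.exp_lt_exp.mpr h1
    calc (1:ℝ) = M₁ * (1/M₁) := by field_simp
      _ < M₁ * Real.exp (ε₁ * x) := mul_lt_mul_of_pos_left h2 hM₁pos
  rcases hξ.lt_or_gt with hlt | hgt
  · -- ξ < ξstar : the lower solution equals the smooth function near ξ
    have hgt0 : M₁ * Real.exp (ε₁ * ξ) < 1 := hkeylt ξ hlt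
    have hmaxξ : max (S₀ * (1 - M₁ * Real.exp (ε₁ * ξ))) 0
        = S₀ * (1 - M₁ * Real.exp (ε₁ * ξ)) :=
      max_eq_left (mul_nonneg hS₀pos.le (by linarith))
    have hopen : IsOpen {x : ℝ | x < ξstar} := isOpen_lt continuous_id continuous_const
    have heq : (fun x => max (S₀ * (1 - M₁ * Real.exp (ε₁ * x))) 0)
        =ᶠ[nhds ξ] (fun x => S₀ * (1 - M₁ * Real.exp (ε₁ * x))) := by
      apply Filter.eventuallyEq_of_mem (hopen.mem_nhds hlt)
      intro x hx
      have h := hkeylt x hx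
      exact max_eq_left (mul_nonneg hS₀pos.le (by linarith))
    have h1 : HasDerivAt (fun x : ℝ => ε₁ * x) ε₁ ξ := by
      simpa using (hasDerivAt_id ξ).const_mul ε₁
    have h2 := h1.exp
    have h3 := ((h2.const_mul M₁).const_sub 1).const_mul S₀
    have hderiv : deriv (fun x => max (S₀ * (1 - M₁ * Real.exp (ε₁ * x))) 0) ξ
        = S₀ * -(M₁ * (Real.exp (ε₁ * ξ) * ε₁)) := by
      rw [heq.deriv_eq]; exact h3.deriv
    have hlapg : lap θ (fun x => S₀ * (1 - M₁ * Real.exp (ε₁ * x))) ξ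
        = -(S₀ * (M₁ * Real.exp (ε₁ * ξ)) * K) := by
      simp only [lap]
      rw [show ε₁ * (ξ + Real.sin θ) = ε₁ * ξ + ε₁ * Real.sin θ from by ring,
        show ε₁ * (ξ - Real.sin θ) = ε₁ * ξ + -(ε₁ * Real.sin θ) from by ring,
        show ε₁ * (ξ + Real.cos θ) = ε₁ * ξ + ε₁ * Real.cos θ from by ring,
        show ε₁ * (ξ - Real.cos θ) = ε₁ * ξ + -(ε₁ * Real.cos θ) from by ring,
        Real.exp_add, Real.exp_add, Real.exp_add, Real.exp_add, hK]
      ring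
    have hlapge : lap θ (fun x => S₀ * (1 - M₁ * Real.exp (ε₁ * x))) ξ
        ≤ lap θ (fun x => max (S₀ * (1 - M₁ * Real.exp (ε₁ * x))) 0) ξ := by
      simp only [lap]
      have l1 := le_max_left (S₀ * (1 - M₁ * Real.exp (ε₁ * (ξ + Real.sin θ)))) (0:ℝ)
      have l2 := le_max_left (S₀ * (1 - M₁ * Real.exp (ε₁ * (ξ - Real.sin θ)))) (0:ℝ)
      have l3 := le_max_left (S₀ * (1 - M₁ * Real.exp (ε₁ * (ξ + Real.cos θ)))) (0:ℝ)
      have l4 := le_max_left (S₀ * (1 - M₁ * Real.exp (ε₁ * (ξ - Real.cos θ)))) (0:ℝ)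
      rw [hmaxξ]
      linarith
    have hEpos : 0 < Real.exp (ε₁ * ξ) := Real.exp_pos _
    have hξneg : ξ < 0 := hlt.trans hξstarneg
    have hexpδ : Real.exp (lam₁ * ξ) ≤ Real.exp (ε₁ * ξ) := by
      apply Real.exp_le_exp.mpr
      have hp := mul_pos (sub_pos.mpr hε₁lt) (neg_pos.mpr hξneg)
      nlinarith [hp]
    have hIvpos : 0 < Iplus ξ := by
      rw [hIplus ξ]; exact lt_min (Real.exp_pos _) hI₀pos
    have hIvle : Iplus ξ ≤ Real.exp (lam₁ * ξ) := by
      rw [hIplus ξ]; exact min_le_left _ _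
    have hfm0 : 0 ≤ max (S₀ * (1 - M₁ * Real.exp (ε₁ * ξ))) 0 := le_max_right _ _
    have hfmS : max (S₀ * (1 - M₁ * Real.exp (ε₁ * ξ))) 0 ≤ S₀ := by
      have hp : 0 ≤ S₀ * M₁ * Real.exp (ε₁ * ξ) :=
        mul_nonneg (mul_nonneg hS₀pos.le hM₁pos.le) (Real.exp_pos _).le
      exact max_le (by linarith only [hp]) hS₀pos.le
    have hinf : β * max (S₀ * (1 - M₁ * Real.exp (ε₁ * ξ))) 0 * Iplus ξ / (1 + α * Iplus ξ)
        ≤ β * S₀ * Real.exp (lam₁ * ξ) := by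
      have hstep1 : β * max (S₀ * (1 - M₁ * Real.exp (ε₁ * ξ))) 0 * Iplus ξ / (1 + α * Iplus ξ)
          ≤ β * max (S₀ * (1 - M₁ * Real.exp (ε₁ * ξ))) 0 * Iplus ξ := by
        apply div_le_self (by positivity)
        have hp := mul_pos hα hIvpos
        linarith only [hp]
      have h3 : max (S₀ * (1 - M₁ * Real.exp (ε₁ * ξ))) 0 * Iplus ξ
          ≤ S₀ * Real.exp (lam₁ * ξ) := mul_le_mul hfmS hIvle hIvpos.le hS₀pos.le
      calc β * max (S₀ * (1 - M₁ * Real.exp (ε₁ * ξ))) 0 * Iplus ξ / (1 + α * Iplus ξ)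
          ≤ β * max (S₀ * (1 - M₁ * Real.exp (ε₁ * ξ))) 0 * Iplus ξ := hstep1
        _ = β * (max (S₀ * (1 - M₁ * Real.exp (ε₁ * ξ))) 0 * Iplus ξ) := by ring
        _ ≤ β * (S₀ * Real.exp (lam₁ * ξ)) := mul_le_mul_of_nonneg_left h3 hβ.le
        _ = β * S₀ * Real.exp (lam₁ * ξ) := by ring
    have hmain : β * Real.exp (lam₁ * ξ)
        ≤ M₁ * Real.exp (ε₁ * ξ) * (c * ε₁ - d₁ * K + μ₁) := by
      have ha : β * Real.exp (lam₁ * ξ) ≤ β * Real.exp (ε₁ * ξ) :=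
        mul_le_mul_of_nonneg_left hexpδ hβ.le
      have hb : β * Real.exp (ε₁ * ξ) ≤ M₁ * (μ₁ - d₁ * K) * Real.exp (ε₁ * ξ) :=
        mul_le_mul_of_nonneg_right hMβ hEpos.le
      have hcε : 0 ≤ M₁ * Real.exp (ε₁ * ξ) * (c * ε₁) := by positivity
      linarith only [ha, hb, hcε]
    have hΛeq : Λ = μ₁ * S₀ := by rw [hS₀]; field_simp
    rw [hderiv, hΛeq, hmaxξ]
    rw [hmaxξ] at hinf
    have hd₁lap := mul_le_mul_of_nonneg_left hlapge hd₁.le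
    rw [hlapg] at hd₁lap
    have hmain2 := mul_le_mul_of_nonneg_left hmain hS₀pos.le
    linarith only [hd₁lap, hinf, hmain2]
  · -- ξstar < ξ : the lower solution vanishes near ξ
    have hle0 : ∀ x : ℝ, ξstar < x → S₀ * (1 - M₁ * Real.exp (ε₁ * x)) ≤ 0 := by
      intro x hx
      have h := hkeygt x hx
      exact mul_nonpos_of_nonneg_of_nonpos hS₀pos.le (by linarith)
    have hmax0 : max (S₀ * (1 - M₁ * Real.exp (ε₁ * ξ))) 0 = 0 :=
      max_eq_right (hle0 ξ hgt)
    have hopen : IsOpen {x : ℝ | ξstar < x} := isOpen_lt continuous_const continuous_id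
    have heq : (fun x => max (S₀ * (1 - M₁ * Real.exp (ε₁ * x))) 0)
        =ᶠ[nhds ξ] (fun _ => (0:ℝ)) := by
      apply Filter.eventuallyEq_of_mem (hopen.mem_nhds hgt)
      intro x hx
      exact max_eq_right (hle0 x hx)
    have hderiv : deriv (fun x => max (S₀ * (1 - M₁ * Real.exp (ε₁ * x))) 0) ξ = 0 := by
      rw [heq.deriv_eq]; exact deriv_const _ _
    have hlap : 0 ≤ lap θ (fun x => max (S₀ * (1 - M₁ * Real.exp (ε₁ * x))) 0) ξ := by
      simp only [lap]
      have l1 := le_max_right (S₀ * (1 - M₁ * Real.exp (ε₁ * (ξ + Real.sin θ)))) (0:ℝ)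
      have l2 := le_max_right (S₀ * (1 - M₁ * Real.exp (ε₁ * (ξ - Real.sin θ)))) (0:ℝ)
      have l3 := le_max_right (S₀ * (1 - M₁ * Real.exp (ε₁ * (ξ + Real.cos θ)))) (0:ℝ)
      have l4 := le_max_right (S₀ * (1 - M₁ * Real.exp (ε₁ * (ξ - Real.cos θ)))) (0:ℝ)
      rw [hmax0]
      linarith
    rw [hderiv, hmax0]
    have hd₁lap := mul_nonneg hd₁.le hlap
    simp only [mul_zero, zero_mul, zero_div, sub_zero]
    linarith
end

section
/- Let Λ, β, α, μ₁, μ₂, d₁, d₂ > 0, θ ∈ ℝ, S₀ = Λ/μ₁, βS₀/μ₂ > 1, c > c*, and let λ₁ < λ₂ be the two positive roots of Δ_c. Let ε₁ ∈ (0, λ₁) and M₁ > 1 be as in the lower-solution lemma for S⁻(ξ) = max{S₀(1 − M₁e^{ε₁ξ}), 0}. Then there exist ε₂ > 0 sufficiently small with 0 < ε₂ < min{λ₁, λ₂ − λ₁} and M₂ > 1 sufficiently large such that the function I⁻(ξ) = max{e^{λ₁ξ}(1 − M₂e^{ε₂ξ}), 0} satisfies, for every ξ ≠ (1/ε₂)·ln(1/M₂),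 the inequality c·(I⁻)'(ξ) ≤ d₂𝔍[I⁻](ξ) + βS⁻(ξ)I⁻(ξ)/(1 + αI⁻(ξ)) − μ₂I⁻(ξ), where 𝔍[φ](ξ) = φ(ξ + sin θ) + φ(ξ − sin θ) + φ(ξ + cos θ) + φ(ξ − cos θ) − 4φ(ξ). -/
lemma key_identity (d₂ β S₀ μ₂ θ c lam₁ ε₂ M₂ ξ : ℝ) :
    d₂ * lap θ (fun x => Real.exp (lam₁ * x) * (1 - M₂ * Real.exp (ε₂ * x))) ξ
      - c * (lam₁ * Real.exp (lam₁ * ξ)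
          - M₂ * (lam₁ + ε₂) * (Real.exp (lam₁ * ξ) * Real.exp (ε₂ * ξ)))
      + (β * S₀ - μ₂) * (Real.exp (lam₁ * ξ) * (1 - M₂ * Real.exp (ε₂ * ξ)))
    = charDelta d₂ β S₀ μ₂ θ c lam₁ * Real.exp (lam₁ * ξ)
      - M₂ * charDelta d₂ β S₀ μ₂ θ c (lam₁ + ε₂)
          * (Real.exp (lam₁ * ξ) * Real.exp (ε₂ * ξ)) := by
  simp only [lap, charDelta, mul_add, mul_sub, add_mul, sub_mul, neg_add, neg_mul,
    Real.exp_add, Real.exp_sub, Real.exp_neg]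
  ring

lemma hasDerivAt_f (lam₁ ε₂ M₂ ξ : ℝ) :
    HasDerivAt (fun x => Real.exp (lam₁ * x) * (1 - M₂ * Real.exp (ε₂ * x)))
      (lam₁ * Real.exp (lam₁ * ξ)
        - M₂ * (lam₁ + ε₂) * (Real.exp (lam₁ * ξ) * Real.exp (ε₂ * ξ))) ξ := by
  have h1 : HasDerivAt (fun x : ℝ => Real.exp (lam₁ * x)) (Real.exp (lam₁ * ξ) * (lam₁ * 1)) ξ :=
    ((hasDerivAt_id ξ).const_mul lam₁).exp
  have h2 : HasDerivAt (fun x : ℝ => Real.exp (ε₂ * x)) (Real.exp (ε₂ * ξ) * (ε₂ * 1)) ξ :=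
    ((hasDerivAt_id ξ).const_mul ε₂).exp
  have h3 := h1.mul ((h2.const_mul M₂).const_sub 1)
  exact h3.congr_deriv (by ring)

lemma exp_thr (ε₂ M₂ : ℝ) (hε₂ : 0 < ε₂) (hM₂ : 0 < M₂) :
    M₂ * Real.exp (ε₂ * (1 / ε₂ * Real.log (1 / M₂))) = 1 := by
  rw [show ε₂ * (1 / ε₂ * Real.log (1 / M₂)) = Real.log (1 / M₂) by field_simp,
    Real.exp_log (by positivity)]
  field_simp

lemma lt_thr (ε₂ M₂ ξ : ℝ) (hε₂ : 0 < ε₂) (hM₂ : 0 < M₂)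
    (h : ξ < 1 / ε₂ * Real.log (1 / M₂)) : M₂ * Real.exp (ε₂ * ξ) < 1 := by
  have h2 : Real.exp (ε₂ * ξ) < Real.exp (ε₂ * (1 / ε₂ * Real.log (1 / M₂))) :=
    Real.exp_lt_exp.mpr (by nlinarith)
  nlinarith [exp_thr ε₂ M₂ hε₂ hM₂]

lemma gt_thr (ε₂ M₂ ξ : ℝ) (hε₂ : 0 < ε₂) (hM₂ : 0 < M₂)
    (h : 1 / ε₂ * Real.log (1 / M₂) < ξ) : 1 < M₂ * Real.exp (ε₂ * ξ) := by
  have h2 : Real.exp (ε₂ * (1 / ε₂ * Real.log (1 / M₂))) < Real.exp (ε₂ * ξ) :=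
    Real.exp_lt_exp.mpr (by nlinarith)
  nlinarith [exp_thr ε₂ M₂ hε₂ hM₂]

lemma deriv_max_of_lt (lam₁ ε₂ M₂ : ℝ) (hε₂ : 0 < ε₂) (hM₂ : 0 < M₂) {ξ : ℝ}
    (h : ξ < 1 / ε₂ * Real.log (1 / M₂)) :
    deriv (fun x => max (Real.exp (lam₁ * x) * (1 - M₂ * Real.exp (ε₂ * x))) 0) ξ
      = lam₁ * Real.exp (lam₁ * ξ)
        - M₂ * (lam₁ + ε₂) * (Real.exp (lam₁ * ξ) * Real.exp (ε₂ * ξ)) := by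
  have hev : (fun x => max (Real.exp (lam₁ * x) * (1 - M₂ * Real.exp (ε₂ * x))) 0)
      =ᶠ[nhds ξ] (fun x => Real.exp (lam₁ * x) * (1 - M₂ * Real.exp (ε₂ * x))) := by
    filter_upwards [Iio_mem_nhds h] with x hx
    have h1 := lt_thr ε₂ M₂ x hε₂ hM₂ hx
    exact max_eq_left (by nlinarith [Real.exp_pos (lam₁ * x)])
  rw [hev.deriv_eq]
  exact (hasDerivAt_f lam₁ ε₂ M₂ ξ).deriv

lemma deriv_max_of_gt (lam₁ ε₂ M₂ : ℝ) (hε₂ : 0 < ε₂) (hM₂ : 0 < M₂) {ξ : ℝ}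
    (h : 1 / ε₂ * Real.log (1 / M₂) < ξ) :
    deriv (fun x => max (Real.exp (lam₁ * x) * (1 - M₂ * Real.exp (ε₂ * x))) 0) ξ = 0 := by
  have hev : (fun x => max (Real.exp (lam₁ * x) * (1 - M₂ * Real.exp (ε₂ * x))) 0)
      =ᶠ[nhds ξ] (fun _ => (0 : ℝ)) := by
    filter_upwards [Ioi_mem_nhds h] with x hx
    have h1 := gt_thr ε₂ M₂ x hε₂ hM₂ hx
    exact max_eq_right (by nlinarith [Real.exp_pos (lam₁ * x)])
  rw [hev.deriv_eq]
  simp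

lemma lap_max_ge (θ : ℝ) (f : ℝ → ℝ) (ξ : ℝ) (h : 0 ≤ f ξ) :
    lap θ f ξ ≤ lap θ (fun x => max (f x) 0) ξ := by
  simp only [lap, max_eq_left h]
  have h1 := le_max_left (f (ξ + Real.sin θ)) 0
  have h2 := le_max_left (f (ξ - Real.sin θ)) 0
  have h3 := le_max_left (f (ξ + Real.cos θ)) 0
  have h4 := le_max_left (f (ξ - Real.cos θ)) 0
  linarith

lemma lap_max_nonneg (θ : ℝ) (f : ℝ → ℝ) (ξ : ℝ) (h : f ξ ≤ 0) :
    0 ≤ lap θ (fun x => max (f x) 0) ξ := by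
  simp only [lap, max_eq_right h]
  have h1 := le_max_right (f (ξ + Real.sin θ)) 0
  have h2 := le_max_right (f (ξ - Real.sin θ)) 0
  have h3 := le_max_right (f (ξ + Real.cos θ)) 0
  have h4 := le_max_right (f (ξ - Real.cos θ)) 0
  linarith

theorem stmt_7 (Λ β α μ₁ μ₂ d₁ d₂ θ : ℝ)
    (hΛ : 0 < Λ) (hβ : 0 < β) (hα : 0 < α) (hμ₁ : 0 < μ₁) (hμ₂ : 0 < μ₂)
    (hd₁ : 0 < d₁) (hd₂ : 0 < d₂)
    (S₀ : ℝ) (hS₀ : S₀ = Λ / μ₁) (hR₀ : 1 < β * S₀ / μ₂)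
    (cstar lamstar c lam₁ lam₂ : ℝ)
    (hcstar : 0 < cstar) (hlamstar : 0 < lamstar)
    (hcritroot : charDelta d₂ β S₀ μ₂ θ cstar lamstar = 0)
    (hcritderiv : deriv (charDelta d₂ β S₀ μ₂ θ cstar) lamstar = 0)
    (hc : cstar < c)
    (hlam₁ : 0 < lam₁) (hlam₁₂ : lam₁ < lam₂)
    (hroot₁ : charDelta d₂ β S₀ μ₂ θ c lam₁ = 0)
    (hroot₂ : charDelta d₂ β S₀ μ₂ θ c lam₂ = 0)
    (hneg : ∀ lam : ℝ, lam₁ < lam → lam < lam₂ → charDelta d₂ β S₀ μ₂ θ c lam < 0)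
    (I₀ : ℝ) (hI₀ : (β * S₀ - μ₂) / (α * μ₂) ≤ I₀)
    (Iplus Sminus : ℝ → ℝ)
    (hIplus : ∀ ξ, Iplus ξ = min (Real.exp (lam₁ * ξ)) I₀)
    (ε₁ M₁ : ℝ) (hε₁ : 0 < ε₁) (hε₁lam₁ : ε₁ < lam₁) (hM₁ : 1 < M₁)
    (hSminus : ∀ ξ, Sminus ξ = max (S₀ * (1 - M₁ * Real.exp (ε₁ * ξ))) 0)
    (hSlower : ∀ ξ : ℝ, ξ ≠ (1 / ε₁) * Real.log (1 / M₁) →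
      c * deriv Sminus ξ ≤
        d₁ * lap θ Sminus ξ + Λ - β * Sminus ξ * Iplus ξ / (1 + α * Iplus ξ) - μ₁ * Sminus ξ) :
    ∃ ε₂ M₂ : ℝ, 0 < ε₂ ∧ ε₂ < min lam₁ (lam₂ - lam₁) ∧ 1 < M₂ ∧
      ∀ ξ : ℝ, ξ ≠ (1 / ε₂) * Real.log (1 / M₂) →
        c * deriv (fun x => max (Real.exp (lam₁ * x) * (1 - M₂ * Real.exp (ε₂ * x))) 0) ξ ≤
          d₂ * lap θ (fun x => max (Real.exp (lam₁ * x) * (1 - M₂ * Real.exp (ε₂ * x))) 0) ξ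
            + β * Sminus ξ * max (Real.exp (lam₁ * ξ) * (1 - M₂ * Real.exp (ε₂ * ξ))) 0 /
                (1 + α * max (Real.exp (lam₁ * ξ) * (1 - M₂ * Real.exp (ε₂ * ξ))) 0)
            - μ₂ * max (Real.exp (lam₁ * ξ) * (1 - M₂ * Real.exp (ε₂ * ξ))) 0 := by
  have hS₀pos : 0 < S₀ := by rw [hS₀]; positivity
  have hmin : 0 < min ε₁ (min lam₁ (lam₂ - lam₁)) :=
    lt_min hε₁ (lt_min hlam₁ (by linarith only [hlam₁₂]))
  set ε₂ := min ε₁ (min lam₁ (lam₂ - lam₁)) / 2 with hε₂def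
  have hε₂pos : 0 < ε₂ := by positivity
  have ha := min_le_left ε₁ (min lam₁ (lam₂ - lam₁))
  have hb := (min_le_right ε₁ (min lam₁ (lam₂ - lam₁))).trans (min_le_left lam₁ (lam₂ - lam₁))
  have hc2 := (min_le_right ε₁ (min lam₁ (lam₂ - lam₁))).trans (min_le_right lam₁ (lam₂ - lam₁))
  have hε₂ε₁ : ε₂ ≤ ε₁ := by rw [hε₂def]; linarith only [ha, hmin]
  have hε₂lam₁ : ε₂ < lam₁ := by rw [hε₂def]; linarith only [hb, hmin]
  have hε₂gap : ε₂ < lam₂ - lam₁ := by rw [hε₂def]; linarith only [hc2, hmin]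
  have hΔ : charDelta d₂ β S₀ μ₂ θ c (lam₁ + ε₂) < 0 :=
    hneg (lam₁ + ε₂) (by linarith only [hε₂pos]) (by linarith only [hε₂gap])
  set D := -(charDelta d₂ β S₀ μ₂ θ c (lam₁ + ε₂)) with hDdef
  have hD : 0 < D := by rw [hDdef]; linarith only [hΔ]
  set M₂ := max 2 (β * S₀ * (M₁ + α) / D) with hM₂def
  have hM₂1 : (1 : ℝ) < M₂ := lt_of_lt_of_le one_lt_two (le_max_left _ _)
  have hM₂0 : (0 : ℝ) < M₂ := by linarith only [hM₂1]
  have hM₂D : β * S₀ * (M₁ + α) ≤ M₂ * D := by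
    have h := le_max_right 2 (β * S₀ * (M₁ + α) / D)
    calc β * S₀ * (M₁ + α) = (β * S₀ * (M₁ + α) / D) * D := by field_simp
      _ ≤ M₂ * D := mul_le_mul_of_nonneg_right h hD.le
  refine ⟨ε₂, M₂, hε₂pos, lt_min hε₂lam₁ hε₂gap, hM₂1, ?_⟩
  intro ξ hξ
  have hξ₂neg : 1 / ε₂ * Real.log (1 / M₂) < 0 := by
    apply mul_neg_of_pos_of_neg (by positivity)
    apply Real.log_neg (by positivity)
    rw [div_lt_one hM₂0]; linarith only [hM₂1]
  rcases lt_or_gt_of_ne hξ with hlt | hgt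
  · -- main case : ξ < ξ₂
    have hξneg : ξ < 0 := lt_trans hlt hξ₂neg
    have hAp : 0 < Real.exp (lam₁ * ξ) := Real.exp_pos _
    have hBp : 0 < Real.exp (ε₂ * ξ) := Real.exp_pos _
    have hEp : 0 < Real.exp (ε₁ * ξ) := Real.exp_pos _
    have h1MB : M₂ * Real.exp (ε₂ * ξ) < 1 := lt_thr ε₂ M₂ ξ hε₂pos hM₂0 hlt
    have hFpos : 0 < Real.exp (lam₁ * ξ) * (1 - M₂ * Real.exp (ε₂ * ξ)) := by
      apply mul_pos hAp; linarith only [h1MB]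
    rw [deriv_max_of_lt lam₁ ε₂ M₂ hε₂pos hM₂0 hlt, max_eq_left hFpos.le]
    set A := Real.exp (lam₁ * ξ) with hAdef
    set B := Real.exp (ε₂ * ξ) with hBdef
    set E := Real.exp (ε₁ * ξ) with hEdef
    set F := A * (1 - M₂ * B) with hFdef
    set S := Sminus ξ with hSdef
    -- bounds on S
    have hS0 : 0 ≤ S := by rw [hSdef, hSminus]; exact le_max_right _ _
    have hSle : S ≤ S₀ := by
      rw [hSdef, hSminus]
      apply max_le _ hS₀pos.le
      have h0 : 0 ≤ S₀ * (M₁ * Real.exp (ε₁ * ξ)) := by positivity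
      linarith only [h0,
        show S₀ * (1 - M₁ * Real.exp (ε₁ * ξ)) = S₀ - S₀ * (M₁ * Real.exp (ε₁ * ξ)) from by ring]
    have hSlow : S₀ - S ≤ S₀ * (M₁ * E) := by
      rw [hSdef, hSminus]
      have h0 := le_max_left (S₀ * (1 - M₁ * Real.exp (ε₁ * ξ))) 0
      rw [← hEdef] at h0 ⊢
      linarith only [h0, show S₀ * (1 - M₁ * E) = S₀ - S₀ * (M₁ * E) from by ring]
    -- exponent comparisons
    have hEB : E ≤ B := by
      rw [hEdef, hBdef]
      apply Real.exp_le_exp.mpr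
      nlinarith only [hξneg, hε₂ε₁]
    have hAB : A ≤ B := by
      rw [hAdef, hBdef]
      apply Real.exp_le_exp.mpr
      nlinarith only [hξneg, hε₂lam₁]
    have hFA : F ≤ A := by
      rw [hFdef]
      have h0 : 0 ≤ A * (M₂ * B) := by positivity
      linarith only [h0, show A * (1 - M₂ * B) = A - A * (M₂ * B) from by ring]
    have hP : 0 < 1 + α * F := by positivity
    -- division bound
    have hdiv : S - S * (α * F) ≤ S / (1 + α * F) := by
      rw [le_div_iff₀ hP]
      have e : (S - S * (α * F)) * (1 + α * F) = S - S * (α * F) ^ 2 := by ring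
      linarith only [e, mul_nonneg hS0 (sq_nonneg (α * F))]
    have hq : β * F * (S - S * (α * F)) ≤ β * S * F / (1 + α * F) := by
      have h := mul_le_mul_of_nonneg_left hdiv (by positivity : (0:ℝ) ≤ β * F)
      calc β * F * (S - S * (α * F)) ≤ β * F * (S / (1 + α * F)) := h
        _ = β * S * F / (1 + α * F) := by ring
    -- main estimate pieces
    have step1 : β * F * (S₀ - S) ≤ β * S₀ * M₁ * (A * B) := by
      have h1 : β * F * (S₀ - S) ≤ β * F * (S₀ * (M₁ * E)) :=
        mul_le_mul_of_nonneg_left hSlow (by positivity)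
      have hFE : F * E ≤ A * B := mul_le_mul hFA hEB hEp.le hAp.le
      have h2 : β * S₀ * M₁ * (F * E) ≤ β * S₀ * M₁ * (A * B) :=
        mul_le_mul_of_nonneg_left hFE (by positivity)
      linarith only [h1, h2,
        show β * F * (S₀ * (M₁ * E)) = β * S₀ * M₁ * (F * E) from by ring]
    have step2 : β * F * (S * (α * F)) ≤ β * S₀ * α * (A * B) := by
      have hFB : F ≤ B := hFA.trans hAB
      have hFF : F * F ≤ A * B := mul_le_mul hFA hFB hFpos.le hAp.le
      have h1 : β * α * (F * F) * S ≤ β * α * (F * F) * S₀ :=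
        mul_le_mul_of_nonneg_left hSle (by positivity)
      have h2 : β * S₀ * α * (F * F) ≤ β * S₀ * α * (A * B) :=
        mul_le_mul_of_nonneg_left hFF (by positivity)
      linarith only [h1, h2,
        show β * F * (S * (α * F)) = β * α * (F * F) * S from by ring,
        show β * α * (F * F) * S₀ = β * S₀ * α * (F * F) from by ring]
    have step3 : β * S₀ * M₁ * (A * B) + β * S₀ * α * (A * B) ≤ M₂ * D * (A * B) := by
      have hABpos : (0:ℝ) ≤ A * B := by positivity
      have h1 := mul_le_mul_of_nonneg_right hM₂D hABpos
      linarith only [h1,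
        show β * S₀ * (M₁ + α) * (A * B)
          = β * S₀ * M₁ * (A * B) + β * S₀ * α * (A * B) from by ring]
    have hring : β * S₀ * F - β * F * (S - S * (α * F))
        = β * F * (S₀ - S) + β * F * (S * (α * F)) := by ring
    -- identity
    have hid := key_identity d₂ β S₀ μ₂ θ c lam₁ ε₂ M₂ ξ
    rw [hroot₁, zero_mul, zero_sub, ← hAdef, ← hBdef, ← hFdef] at hid
    have hDrel : M₂ * D * (A * B)
        = -(M₂ * charDelta d₂ β S₀ μ₂ θ c (lam₁ + ε₂) * (A * B)) := by
      rw [hDdef]; ring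
    have hlap : lap θ (fun x => Real.exp (lam₁ * x) * (1 - M₂ * Real.exp (ε₂ * x))) ξ
        ≤ lap θ (fun x => max (Real.exp (lam₁ * x) * (1 - M₂ * Real.exp (ε₂ * x))) 0) ξ :=
      lap_max_ge θ _ ξ hFpos.le
    have hlapd : d₂ * lap θ (fun x => Real.exp (lam₁ * x) * (1 - M₂ * Real.exp (ε₂ * x))) ξ
        ≤ d₂ * lap θ (fun x => max (Real.exp (lam₁ * x) * (1 - M₂ * Real.exp (ε₂ * x))) 0) ξ :=
      mul_le_mul_of_nonneg_left hlap hd₂.le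
    have hring2 : (β * S₀ - μ₂) * F = β * S₀ * F - μ₂ * F := by ring
    clear_value A B E F S D M₂ ε₂
    have hmain : β * S₀ * F - β * S * F / (1 + α * F) ≤ M₂ * D * (A * B) := by
      linarith only [hq, step1, step2, step3, hring]
    linarith only [hid, hlapd, hmain, hDrel, hring2]
  · -- ξ > ξ₂ : the profile vanishes near ξ
    have h1MB : 1 < M₂ * Real.exp (ε₂ * ξ) := gt_thr ε₂ M₂ ξ hε₂pos hM₂0 hgt
    have hFneg : Real.exp (lam₁ * ξ) * (1 - M₂ * Real.exp (ε₂ * ξ)) ≤ 0 := by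
      nlinarith only [Real.exp_pos (lam₁ * ξ), h1MB]
    rw [deriv_max_of_gt lam₁ ε₂ M₂ hε₂pos hM₂0 hgt, max_eq_right hFneg]
    have hlap := lap_max_nonneg θ
      (fun x => Real.exp (lam₁ * x) * (1 - M₂ * Real.exp (ε₂ * x))) ξ hFneg
    have hdl := mul_nonneg hd₂.le hlap
    simp only [mul_zero, add_zero, zero_div, sub_zero]
    linarith only [hdl]
end

section
/- In the setting of the upper and lower solutions S⁺ ≡ S₀, I⁺, S⁻, I⁻ (with parameters Λ, β, α, μ₁, μ₂, d₁, d₂ > 0, S₀ = Λ/μ₁, βS₀/μ₂ > 1, c > c*), let X > max{−𝔅₁, −𝔅₂} where 𝔅₁ = (1/ε₁)ln(1/M₁) and 𝔅₂ = (1/ε₂)ln(1/M₂), and fix κ ≥ β/α. Let (φ, ψ) be continuous on [−X, X] with S⁻ ≤ φ ≤ S₀, I⁻ ≤ ψ ≤ I⁺, φ(−X) = S⁻(−X), ψ(−X) = I⁻(−X); extend φ to φ̂ on ℝ by φ̂(ξ) = φ(X) for ξ > X and φ̂(ξ) = S⁻(ξ) for ξ < −X, and extend ψ to ψ̂ analogously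 using I⁻. Suppose (S, I) ∈ C¹([−X, X]; ℝ²) solves the linear initial value problem cS'(ξ) + (4d₁ + μ₁ + κ)S(ξ) = d₁[φ̂(ξ + sin θ) + φ̂(ξ − sin θ) + φ̂(ξ + cos θ) + φ̂(ξ − cos θ)] + Λ − βφ(ξ)ψ(ξ)/(1 + αψ(ξ)) + κφ(ξ), cI'(ξ) + (4d₂ + μ₂)I(ξ) = d₂[ψ̂(ξ + sin θ) + ψ̂(ξ − sin θ) + ψ̂(ξ + cos θ) + ψ̂(ξ − cos θ)] + βφ(ξ)ψ(ξ)/(1 + αψ(ξ)), with S(−X) = S⁻(−X), I(−X) = I⁻(−X). Then S⁻(ξ) ≤ S(ξ) ≤ S₀ and I⁻(ξ) ≤ I(ξ) ≤ I⁺(ξ) for all ξ ∈ [−X, X]. -/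
open Real Set Filter

section helpers

/-- monotone on Icc with derivative nonneg at interior points. -/
lemma monoIcc {v : ℝ → ℝ} {a b : ℝ}
    (hcont : ContinuousOn v (Icc a b))
    (hd : ∀ x ∈ Ioo a b, DifferentiableAt ℝ v x ∧ 0 ≤ deriv v x) :
    MonotoneOn v (Icc a b) := by
  apply monotoneOn_of_deriv_nonneg (convex_Icc a b) hcont
  · rw [interior_Icc]; exact fun x hx => ((hd x hx).1).differentiableWithinAt
  · rw [interior_Icc]; exact fun x hx => (hd x hx).2

/-- monotonicity with one exceptional point. -/
lemma monoIcc_except {v : ℝ → ℝ} {a b m : ℝ}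
    (hcont : ContinuousOn v (Icc a b))
    (hd : ∀ x ∈ Ioo a b, x ≠ m → DifferentiableAt ℝ v x ∧ 0 ≤ deriv v x) :
    ∀ x ∈ Icc a b, v a ≤ v x := by
  intro x hx
  rcases le_or_gt x m with hxm | hmx
  · -- on [a, min b m]
    have h1 : MonotoneOn v (Icc a (min b m)) := by
      apply monoIcc (hcont.mono (Icc_subset_Icc le_rfl (min_le_left _ _)))
      intro y hy
      exact hd y ⟨hy.1, lt_of_lt_of_le hy.2 (min_le_left _ _)⟩
        (ne_of_lt (lt_of_lt_of_le hy.2 (min_le_right _ _)))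
    exact h1 ⟨le_refl a, le_trans hx.1 (le_min hx.2 hxm)⟩ ⟨hx.1, le_min hx.2 hxm⟩ hx.1
  · -- m < x. Then v a ≤ v (max a m) ≤ v x
    rcases le_or_gt m a with hma | ham
    · have h2 : MonotoneOn v (Icc a b) := by
        apply monoIcc hcont
        intro y hy
        exact hd y hy (ne_of_gt (lt_of_le_of_lt hma hy.1))
      exact h2 (left_mem_Icc.2 (hx.1.trans hx.2)) hx hx.1
    · have hmb : m < b := lt_of_lt_of_le hmx hx.2
      have h1 : MonotoneOn v (Icc a m) := by
        apply monoIcc (hcont.mono (Icc_subset_Icc le_rfl hmb.le))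
        intro y hy
        exact hd y ⟨hy.1, hy.2.trans hmb⟩ (ne_of_lt hy.2)
      have h2 : MonotoneOn v (Icc m b) := by
        apply monoIcc (hcont.mono (Icc_subset_Icc ham.le le_rfl))
        intro y hy
        exact hd y ⟨ham.trans hy.1, hy.2⟩ (ne_of_gt hy.1)
      have : v a ≤ v m := h1 (left_mem_Icc.2 ham.le) (right_mem_Icc.2 ham.le) ham.le
      exact this.trans (h2 ⟨le_rfl, hmb.le⟩ ⟨hmx.le, hx.2⟩ hmx.le)

/-- Grönwall-type nonnegativity. -/
lemma gronwall_nonneg {c k : ℝ} (hc : 0 < c) {w : ℝ → ℝ} {a b m : ℝ}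
    (hw : ContinuousOn w (Icc a b)) (ha : 0 ≤ w a)
    (hd : ∀ x ∈ Ioo a b, x ≠ m →
      ∃ w', HasDerivAt w w' x ∧ 0 ≤ c * w' + k * w x) :
    ∀ x ∈ Icc a b, 0 ≤ w x := by
  set v : ℝ → ℝ := fun x => Real.exp (k / c * x) * w x with hv
  have hvc : ContinuousOn v (Icc a b) :=
    (Real.continuous_exp.comp (continuous_const.mul continuous_id)).continuousOn.mul hw
  have key : ∀ x ∈ Icc a b, v a ≤ v x := by
    apply monoIcc_except hvc
    intro x hx hxm
    obtain ⟨w', hw', hineq⟩ := hd x hx hxm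
    have hder : HasDerivAt v (Real.exp (k / c * x) * (k / c) * w x
        + Real.exp (k / c * x) * w') x := by
      have he : HasDerivAt (fun x => Real.exp (k / c * x)) (Real.exp (k / c * x) * (k / c)) x := by
        simpa [Function.comp_def] using (Real.hasDerivAt_exp (k / c * x)).comp x
          ((hasDerivAt_id x).const_mul (k / c))
      exact he.mul hw'
    refine ⟨hder.differentiableAt, ?_⟩
    rw [hder.deriv]
    have hep : (0:ℝ) < Real.exp (k / c * x) := Real.exp_pos _
    have : 0 ≤ k / c * w x + w' := by
      have := div_nonneg hineq hc.le
      rw [add_div] at this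
      calc (0:ℝ) ≤ c * w' / c + k * w x / c := by linarith [this]
        _ = k / c * w x + w' := by field_simp; ring
    nlinarith
  intro x hx
  have := key x hx
  have hva : 0 ≤ v a := mul_nonneg (Real.exp_pos _).le ha
  have h2 : 0 ≤ Real.exp (k / c * x) * w x := le_trans hva this
  have hep : (0:ℝ) < Real.exp (k / c * x) := Real.exp_pos _
  nlinarith [h2, hep, mul_pos hep hep]

/-- monotonicity of s*t/(1+αt). -/
lemma nl_mono {α s₁ s₂ t₁ t₂ : ℝ} (hα : 0 < α) (hs₁ : 0 ≤ s₁) (hs : s₁ ≤ s₂)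
    (ht₁ : 0 ≤ t₁) (ht : t₁ ≤ t₂) :
    s₁ * t₁ / (1 + α * t₁) ≤ s₂ * t₂ / (1 + α * t₂) := by
  have h1 : (0:ℝ) < 1 + α * t₁ := by nlinarith
  have h2 : (0:ℝ) < 1 + α * t₂ := by nlinarith
  rw [div_le_div_iff₀ h1 h2]
  have hA : s₁ * t₁ ≤ s₂ * t₂ := mul_le_mul hs ht ht₁ (hs₁.trans hs)
  have hB : α * (s₁ * (t₁ * t₂)) ≤ α * (s₂ * (t₁ * t₂)) := by
    have h0 : 0 ≤ t₁ * t₂ := mul_nonneg ht₁ (ht₁.trans ht)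
    exact mul_le_mul_of_nonneg_left (mul_le_mul_of_nonneg_right hs h0) hα.le
  nlinarith [hA, hB]

/-- Lipschitz-type bound. -/
lemma nl_lip {α β κ s₁ s₂ t₁ t₂ : ℝ} (hα : 0 < α) (hβ : 0 < β) (hκ : β / α ≤ κ)
    (hs₁ : 0 ≤ s₁) (hs : s₁ ≤ s₂) (ht₁ : 0 ≤ t₁) (ht : t₁ ≤ t₂) :
    β * s₂ * t₁ / (1 + α * t₁) - β * s₁ * t₂ / (1 + α * t₂) ≤ κ * (s₂ - s₁) := by
  have h1 : (0:ℝ) < 1 + α * t₁ := by nlinarith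
  have h2 : (0:ℝ) < 1 + α * t₂ := by nlinarith
  have step1 : β * s₂ * t₁ / (1 + α * t₁) - β * s₁ * t₁ / (1 + α * t₁) ≤ κ * (s₂ - s₁) := by
    rw [div_sub_div_same, div_le_iff₀ h1]
    have hβα : β ≤ κ * α := by
      have := (div_le_iff₀ hα).1 hκ; linarith
    nlinarith [mul_nonneg (sub_nonneg.2 hs) ht₁, mul_nonneg (mul_nonneg (sub_nonneg.2 hs) ht₁) hα.le]
  have step2 : β * s₁ * t₁ / (1 + α * t₁) ≤ β * s₁ * t₂ / (1 + α * t₂) := by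
    have := nl_mono hα (mul_nonneg hβ.le hs₁) (le_refl (β * s₁)) ht₁ ht
    linarith [this]
  linarith


lemma exp_lt_iff_aux {l C x : ℝ} (hl : 0 < l) (hC : 0 < C) :
    Real.exp (l * x) < C ↔ x < (1 / l) * Real.log C := by
  rw [← Real.exp_log hC, Real.exp_lt_exp, Real.log_exp,
    show (1/l) * Real.log C = Real.log C / l from by ring, lt_div_iff₀ hl]
  constructor <;> intro h <;> linarith

lemma lt_exp_iff_aux {l C x : ℝ} (hl : 0 < l) (hC : 0 < C) :
    C < Real.exp (l * x) ↔ (1 / l) * Real.log C < x := by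
  rw [← Real.exp_log hC, Real.exp_lt_exp, Real.log_exp,
    show (1/l) * Real.log C = Real.log C / l from by ring, div_lt_iff₀ hl]
  constructor <;> intro h <;> linarith

lemma ev_max_pos {g : ℝ → ℝ} {x : ℝ} (hg : Continuous g) (hpos : 0 < g x) :
    (fun y => max (g y) 0) =ᶠ[nhds x] g := by
  have : {y | 0 < g y} ∈ nhds x := (isOpen_lt continuous_const hg).mem_nhds hpos
  filter_upwards [this] with y hy
  exact max_eq_left hy.le

lemma ev_max_neg {g : ℝ → ℝ} {x : ℝ} (hg : Continuous g) (hneg : g x < 0) :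
    (fun y => max (g y) 0) =ᶠ[nhds x] (fun _ => (0:ℝ)) := by
  have : {y | g y < 0} ∈ nhds x := (isOpen_lt hg continuous_const).mem_nhds hneg
  filter_upwards [this] with y hy
  exact max_eq_right hy.le

lemma ev_min_lt {g : ℝ → ℝ} {x C : ℝ} (hg : Continuous g) (h : g x < C) :
    (fun y => min (g y) C) =ᶠ[nhds x] g := by
  have : {y | g y < C} ∈ nhds x := (isOpen_lt hg continuous_const).mem_nhds h
  filter_upwards [this] with y hy
  exact min_eq_left hy.le

lemma ev_min_gt {g : ℝ → ℝ} {x C : ℝ} (hg : Continuous g) (h : C < g x) :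
    (fun y => min (g y) C) =ᶠ[nhds x] (fun _ => C) := by
  have : {y | C < g y} ∈ nhds x := (isOpen_lt continuous_const hg).mem_nhds h
  filter_upwards [this] with y hy
  exact min_eq_right hy.le

lemma exp_mul_hasDerivAt (l x : ℝ) :
    HasDerivAt (fun y : ℝ => Real.exp (l * y)) (Real.exp (l * x) * l) x := by
  simpa [Function.comp_def] using (Real.hasDerivAt_exp (l * x)).comp x ((hasDerivAt_id x).const_mul l)

/-- the hump `e^{lx} - M e^{(l+ε)x}` is maximized at `ζ = (1/ε) log (l/((l+ε)M))`. -/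
lemma hump_max {l ε M : ℝ} (hl : 0 < l) (hε : 0 < ε) (hM : 0 < M) (x : ℝ) :
    Real.exp (l * x) - M * Real.exp ((l + ε) * x) ≤
    Real.exp (l * ((1/ε) * Real.log (l / ((l + ε) * M)))) -
      M * Real.exp ((l + ε) * ((1/ε) * Real.log (l / ((l + ε) * M)))) := by
  set ζ := (1/ε) * Real.log (l / ((l + ε) * M)) with hζdef
  have hA : (0:ℝ) < l / ((l + ε) * M) := by positivity
  have hexpζ : Real.exp (ε * ζ) = l / ((l + ε) * M) := by
    rw [hζdef, show ε * ((1/ε) * Real.log (l / ((l + ε) * M))) = Real.log (l / ((l + ε) * M))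
      by field_simp]
    exact Real.exp_log hA
  set h : ℝ → ℝ := fun y => Real.exp (l * y) - M * Real.exp ((l + ε) * y) with hh
  have hder : ∀ y, HasDerivAt h
      (Real.exp (l * y) * l - M * (Real.exp ((l + ε) * y) * (l + ε))) y := by
    intro y
    exact (exp_mul_hasDerivAt l y).sub ((exp_mul_hasDerivAt (l + ε) y).const_mul M)
  have hcont : Continuous h := by
    apply Continuous.sub
    · exact Real.continuous_exp.comp (continuous_const.mul continuous_id)
    · exact continuous_const.mul (Real.continuous_exp.comp (continuous_const.mul continuous_id))
  have hsplit : ∀ y : ℝ, Real.exp ((l + ε) * y) = Real.exp (l * y) * Real.exp (ε * y) := by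
    intro y; rw [← Real.exp_add]; ring_nf
  have hsign : ∀ y : ℝ, y ≤ ζ →
      0 ≤ Real.exp (l * y) * l - M * (Real.exp ((l + ε) * y) * (l + ε)) := by
    intro y hy
    have e2 : Real.exp (ε * y) ≤ l / ((l + ε) * M) := by
      rw [← hexpζ]; exact Real.exp_le_exp.2 (by nlinarith)
    have e3 : Real.exp (ε * y) * ((l + ε) * M) ≤ l := by
      rw [← le_div_iff₀ (by positivity)]; exact e2
    have := Real.exp_pos (l * y)
    rw [hsplit]
    nlinarith
  have hsign' : ∀ y : ℝ, ζ ≤ y →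
      Real.exp (l * y) * l - M * (Real.exp ((l + ε) * y) * (l + ε)) ≤ 0 := by
    intro y hy
    have e2 : l / ((l + ε) * M) ≤ Real.exp (ε * y) := by
      rw [← hexpζ]; exact Real.exp_le_exp.2 (by nlinarith)
    have e3 : l ≤ Real.exp (ε * y) * ((l + ε) * M) := by
      rw [← div_le_iff₀ (by positivity)]; exact e2
    have := Real.exp_pos (l * y)
    rw [hsplit]
    nlinarith
  rcases le_total x ζ with hx | hx
  · have hmono : MonotoneOn h (Icc x ζ) := by
      apply monotoneOn_of_deriv_nonneg (convex_Icc _ _) hcont.continuousOn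
      · exact fun y _ => (hder y).differentiableAt.differentiableWithinAt
      · rw [interior_Icc]
        intro y hy
        rw [(hder y).deriv]
        exact hsign y hy.2.le
    exact hmono ⟨le_rfl, hx⟩ ⟨hx, le_rfl⟩ hx
  · have hanti : AntitoneOn h (Icc ζ x) := by
      apply antitoneOn_of_deriv_nonpos (convex_Icc _ _) hcont.continuousOn
      · exact fun y _ => (hder y).differentiableAt.differentiableWithinAt
      · rw [interior_Icc]
        intro y hy
        rw [(hder y).deriv]
        exact hsign' y hy.1.le
    exact hanti ⟨le_rfl, hx⟩ ⟨hx, le_rfl⟩ hx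

end helpers

set_option maxHeartbeats 4000000 in
theorem stmt_8 (Λ β α μ₁ μ₂ d₁ d₂ θ : ℝ)
    (hΛ : 0 < Λ) (hβ : 0 < β) (hα : 0 < α) (hμ₁ : 0 < μ₁) (hμ₂ : 0 < μ₂)
    (hd₁ : 0 < d₁) (hd₂ : 0 < d₂)
    (S₀ : ℝ) (hS₀ : S₀ = Λ / μ₁) (hR₀ : 1 < β * S₀ / μ₂)
    -- the wave speed c exceeds the critical speed c*
    (cstar lamstar c : ℝ) (hcstar : 0 < cstar) (hlamstar : 0 < lamstar)
    (hcritroot : charDelta d₂ β S₀ μ₂ θ cstar lamstar = 0)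
    (hcritderiv : deriv (charDelta d₂ β S₀ μ₂ θ cstar) lamstar = 0)
    (hc : cstar < c)
    -- λ₁ < λ₂ are the two positive roots of Δ_c
    (lam₁ lam₂ : ℝ) (hlam₁ : 0 < lam₁) (hlam₁₂ : lam₁ < lam₂)
    (hroot₁ : charDelta d₂ β S₀ μ₂ θ c lam₁ = 0)
    (hroot₂ : charDelta d₂ β S₀ μ₂ θ c lam₂ = 0)
    -- the upper and lower solutions
    (I₀ : ℝ) (hI₀ : (β * S₀ - μ₂) / (α * μ₂) ≤ I₀)
    (ε₁ ε₂ M₁ M₂ : ℝ) (hε₁ : 0 < ε₁) (hε₁lam₁ : ε₁ < lam₁)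
    (hε₂ : 0 < ε₂) (hε₂lam₁ : ε₂ < lam₁) (hM₁ : 1 < M₁) (hM₂ : 1 < M₂)
    (Sminus Iplus Iminus : ℝ → ℝ)
    (hSminus : ∀ ξ, Sminus ξ = max (S₀ * (1 - M₁ * Real.exp (ε₁ * ξ))) 0)
    (hIplus : ∀ ξ, Iplus ξ = min (Real.exp (lam₁ * ξ)) I₀)
    (hIminus : ∀ ξ, Iminus ξ = max (Real.exp (lam₁ * ξ) * (1 - M₂ * Real.exp (ε₂ * ξ))) 0)
    -- M₁, M₂, ε₁, ε₂ chosen so that the upper/lower solution differential inequalities hold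
    (hIplusIneq : ∀ ξ : ℝ, ξ ≠ (1 / lam₁) * Real.log I₀ →
      d₂ * lap θ Iplus ξ + β * S₀ * Iplus ξ / (1 + α * Iplus ξ) - μ₂ * Iplus ξ
        ≤ c * deriv Iplus ξ)
    (hSminusIneq : ∀ ξ : ℝ, ξ ≠ (1 / ε₁) * Real.log (1 / M₁) →
      c * deriv Sminus ξ ≤
        d₁ * lap θ Sminus ξ + Λ - β * Sminus ξ * Iplus ξ / (1 + α * Iplus ξ) - μ₁ * Sminus ξ)
    (hIminusIneq : ∀ ξ : ℝ, ξ ≠ (1 / ε₂) * Real.log (1 / M₂) →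
      c * deriv Iminus ξ ≤
        d₂ * lap θ Iminus ξ + β * Sminus ξ * Iminus ξ / (1 + α * Iminus ξ) - μ₂ * Iminus ξ)
    -- the truncation interval and the constant κ
    (X κ : ℝ)
    (hX : max (-((1 / ε₁) * Real.log (1 / M₁))) (-((1 / ε₂) * Real.log (1 / M₂))) < X)
    (hκ : β / α ≤ κ)
    -- the profile pair (φ, ψ) ∈ Γ_X and its extensions
    (φ ψ φhat ψhat : ℝ → ℝ)
    (hφcont : ContinuousOn φ (Set.Icc (-X) X)) (hψcont : ContinuousOn ψ (Set.Icc (-X) X))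
    (hφbd : ∀ ξ ∈ Set.Icc (-X) X, Sminus ξ ≤ φ ξ ∧ φ ξ ≤ S₀)
    (hψbd : ∀ ξ ∈ Set.Icc (-X) X, Iminus ξ ≤ ψ ξ ∧ ψ ξ ≤ Iplus ξ)
    (hφinit : φ (-X) = Sminus (-X)) (hψinit : ψ (-X) = Iminus (-X))
    (hφhat : ∀ ξ : ℝ, φhat ξ = if ξ < -X then Sminus ξ else if ξ ≤ X then φ ξ else φ X)
    (hψhat : ∀ ξ : ℝ, ψhat ξ = if ξ < -X then Iminus ξ else if ξ ≤ X then ψ ξ else ψ X)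
    -- the C¹ solution (S, I) of the linear initial value problem
    (S I S' I' : ℝ → ℝ)
    (hS : ∀ ξ ∈ Set.Icc (-X) X, HasDerivWithinAt S (S' ξ) (Set.Icc (-X) X) ξ)
    (hI : ∀ ξ ∈ Set.Icc (-X) X, HasDerivWithinAt I (I' ξ) (Set.Icc (-X) X) ξ)
    (hSeq : ∀ ξ ∈ Set.Icc (-X) X,
      c * S' ξ + (4 * d₁ + μ₁ + κ) * S ξ =
        d₁ * (φhat (ξ + Real.sin θ) + φhat (ξ - Real.sin θ) +
              φhat (ξ + Real.cos θ) + φhat (ξ - Real.cos θ)) +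
          Λ - β * φ ξ * ψ ξ / (1 + α * ψ ξ) + κ * φ ξ)
    (hIeq : ∀ ξ ∈ Set.Icc (-X) X,
      c * I' ξ + (4 * d₂ + μ₂) * I ξ =
        d₂ * (ψhat (ξ + Real.sin θ) + ψhat (ξ - Real.sin θ) +
              ψhat (ξ + Real.cos θ) + ψhat (ξ - Real.cos θ)) +
          β * φ ξ * ψ ξ / (1 + α * ψ ξ))
    (hSinit : S (-X) = Sminus (-X)) (hIinit : I (-X) = Iminus (-X)) :
    ∀ ξ ∈ Set.Icc (-X) X,
      Sminus ξ ≤ S ξ ∧ S ξ ≤ S₀ ∧ Iminus ξ ≤ I ξ ∧ I ξ ≤ Iplus ξ := by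
  -- basic positivity facts
  have hc0 : 0 < c := hcstar.trans hc
  have hS₀pos : 0 < S₀ := by rw [hS₀]; positivity
  have hβS₀ : μ₂ < β * S₀ := by
    have := (one_lt_div hμ₂).1 hR₀; linarith
  have hI₀pos : 0 < I₀ := lt_of_lt_of_le (div_pos (by linarith only [hβS₀]) (by positivity)) hI₀
  have hκ0 : 0 < κ := lt_of_lt_of_le (div_pos hβ hα) hκ
  have hμ₁S₀ : μ₁ * S₀ = Λ := by rw [hS₀]; field_simp
  set ξ₁ : ℝ := 1 / ε₁ * Real.log (1 / M₁) with hξ₁def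
  set ξ₂ : ℝ := 1 / ε₂ * Real.log (1 / M₂) with hξ₂def
  set ξ₀ : ℝ := 1 / lam₁ * Real.log I₀ with hξ₀def
  have hξ₁neg : ξ₁ < 0 := by
    have hlog : Real.log (1 / M₁) < 0 := Real.log_neg (by positivity) (by
      rw [div_lt_one (by positivity)]; exact hM₁)
    rw [hξ₁def]
    exact mul_neg_of_pos_of_neg (by positivity) hlog
  have hξ₂neg : ξ₂ < 0 := by
    have hlog : Real.log (1 / M₂) < 0 := Real.log_neg (by positivity) (by
      rw [div_lt_one (by positivity)]; exact hM₂)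
    rw [hξ₂def]
    exact mul_neg_of_pos_of_neg (by positivity) hlog
  have hX0 : 0 < X := by
    have h := le_max_left (-ξ₁) (-ξ₂)
    linarith only [hX, h, hξ₁neg]
  have hXX : -X ≤ X := by linarith only [hX0]
  have hmemX : X ∈ Icc (-X) X := ⟨hXX, le_rfl⟩
  have hmemmX : (-X) ∈ Icc (-X) X := ⟨le_rfl, hXX⟩
  -- inner functions
  set gS : ℝ → ℝ := fun y => S₀ * (1 - M₁ * Real.exp (ε₁ * y)) with hgSdef
  set gJ : ℝ → ℝ := fun y => Real.exp (lam₁ * y) * (1 - M₂ * Real.exp (ε₂ * y)) with hgJdef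
  have hgScont : Continuous gS := by
    apply continuous_const.mul
    exact continuous_const.sub (continuous_const.mul
      (Real.continuous_exp.comp (continuous_const.mul continuous_id)))
  have hgJcont : Continuous gJ := by
    apply Continuous.mul
    · exact Real.continuous_exp.comp (continuous_const.mul continuous_id)
    · exact continuous_const.sub (continuous_const.mul
        (Real.continuous_exp.comp (continuous_const.mul continuous_id)))
  have hSmeq : Sminus = fun y => max (gS y) 0 := funext hSminus
  have hImeq : Iminus = fun y => max (gJ y) 0 := funext hIminus
  -- basic bounds for Sminus
  have hSm0 : ∀ y, 0 ≤ Sminus y := fun y => by rw [hSminus y]; exact le_max_right _ _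
  have hSmS₀ : ∀ y, Sminus y ≤ S₀ := fun y => by
    rw [hSminus y]
    refine max_le ?_ hS₀pos.le
    have h := mul_pos (mul_pos hS₀pos (show (0:ℝ) < M₁ from by linarith only [hM₁])) (Real.exp_pos (ε₁ * y))
    linarith only [h]
  have hSmCont : Continuous Sminus := by rw [hSmeq]; exact hgScont.max continuous_const
  have hSmAnti : Antitone Sminus := by
    intro a b hab
    rw [hSminus a, hSminus b]
    refine max_le_max ?_ le_rfl
    have h1 : Real.exp (ε₁ * a) ≤ Real.exp (ε₁ * b) :=
      Real.exp_le_exp.2 (mul_le_mul_of_nonneg_left hab hε₁.le)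
    have h2 : M₁ * Real.exp (ε₁ * a) ≤ M₁ * Real.exp (ε₁ * b) :=
      mul_le_mul_of_nonneg_left h1 (by linarith only [hM₁])
    exact mul_le_mul_of_nonneg_left (by linarith only [h2]) hS₀pos.le
  -- sign of gS
  have hgSpos : ∀ x, x < ξ₁ → 0 < gS x := by
    intro x hx
    have h1 : Real.exp (ε₁ * x) < 1 / M₁ := (exp_lt_iff_aux hε₁ (by positivity)).2 hx
    have h2 : M₁ * Real.exp (ε₁ * x) < 1 := by
      rw [lt_div_iff₀ (by positivity : (0:ℝ) < M₁)] at h1; rw [mul_comm]; linarith only [h1]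
    show 0 < S₀ * (1 - M₁ * Real.exp (ε₁ * x))
    exact mul_pos hS₀pos (by linarith only [h2])
  have hgSneg : ∀ x, ξ₁ < x → gS x < 0 := by
    intro x hx
    have h1 : 1 / M₁ < Real.exp (ε₁ * x) := (lt_exp_iff_aux hε₁ (by positivity)).2 hx
    have h2 : 1 < M₁ * Real.exp (ε₁ * x) := by
      rw [div_lt_iff₀ (by positivity : (0:ℝ) < M₁)] at h1; rw [mul_comm]; linarith only [h1]
    show S₀ * (1 - M₁ * Real.exp (ε₁ * x)) < 0
    exact mul_neg_of_pos_of_neg hS₀pos (by linarith only [h2])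
  have hSmDiff : ∀ x, x ≠ ξ₁ → DifferentiableAt ℝ Sminus x := by
    intro x hx
    rw [hSmeq]
    rcases hx.lt_or_gt with h | h
    · have hev := ev_max_pos hgScont (hgSpos x h)
      refine (hev.differentiableAt_iff).2 ?_
      exact ((((exp_mul_hasDerivAt ε₁ x).const_mul M₁).const_sub 1).const_mul S₀).differentiableAt
    · exact (ev_max_neg hgScont (hgSneg x h)).differentiableAt_iff.2 (differentiableAt_const 0)

  -- Iplus facts
  have hIpeq : Iplus = fun y => min (Real.exp (lam₁ * y)) I₀ := funext hIplus
  have hexpc : Continuous (fun y : ℝ => Real.exp (lam₁ * y)) :=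
    Real.continuous_exp.comp (continuous_const.mul continuous_id)
  have hIpCont : Continuous Iplus := by
    rw [hIpeq]; exact hexpc.min continuous_const
  have hIpMono : Monotone Iplus := by
    intro a b hab
    rw [hIplus a, hIplus b]
    exact min_le_min (Real.exp_le_exp.2 (mul_le_mul_of_nonneg_left hab hlam₁.le)) le_rfl
  have hIpDiff : ∀ x, x ≠ ξ₀ → DifferentiableAt ℝ Iplus x := by
    intro x hx
    rw [hIpeq]
    rcases hx.lt_or_gt with h | h
    · have hlt : Real.exp (lam₁ * x) < I₀ := (exp_lt_iff_aux hlam₁ hI₀pos).2 h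
      exact ((ev_min_lt hexpc hlt).differentiableAt_iff).2 (exp_mul_hasDerivAt lam₁ x).differentiableAt
    · have hlt : I₀ < Real.exp (lam₁ * x) := (lt_exp_iff_aux hlam₁ hI₀pos).2 h
      exact ((ev_min_gt hexpc hlt).differentiableAt_iff).2 (differentiableAt_const I₀)
  -- Iminus facts
  have hIm0 : ∀ y, 0 ≤ Iminus y := fun y => by rw [hIminus y]; exact le_max_right _ _
  have hImCont : Continuous Iminus := by rw [hImeq]; exact hgJcont.max continuous_const
  have hImExp : ∀ y, Iminus y ≤ Real.exp (lam₁ * y) := fun y => by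
    rw [hIminus y]
    refine max_le ?_ (Real.exp_pos _).le
    have h := mul_pos (Real.exp_pos (lam₁ * y))
      (mul_pos (show (0:ℝ) < M₂ from by linarith only [hM₂]) (Real.exp_pos (ε₂ * y)))
    linarith only [h]
  have hgJpos : ∀ x, x < ξ₂ → 0 < gJ x := by
    intro x hx
    have h1 : Real.exp (ε₂ * x) < 1 / M₂ := (exp_lt_iff_aux hε₂ (by positivity)).2 hx
    have h2 : M₂ * Real.exp (ε₂ * x) < 1 := by
      rw [lt_div_iff₀ (by positivity : (0:ℝ) < M₂)] at h1; rw [mul_comm]; linarith only [h1]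
    show 0 < Real.exp (lam₁ * x) * (1 - M₂ * Real.exp (ε₂ * x))
    exact mul_pos (Real.exp_pos _) (by linarith only [h2])
  have hgJneg : ∀ x, ξ₂ < x → gJ x < 0 := by
    intro x hx
    have h1 : 1 / M₂ < Real.exp (ε₂ * x) := (lt_exp_iff_aux hε₂ (by positivity)).2 hx
    have h2 : 1 < M₂ * Real.exp (ε₂ * x) := by
      rw [div_lt_iff₀ (by positivity : (0:ℝ) < M₂)] at h1; rw [mul_comm]; linarith only [h1]
    show Real.exp (lam₁ * x) * (1 - M₂ * Real.exp (ε₂ * x)) < 0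
    exact mul_neg_of_pos_of_neg (Real.exp_pos _) (by linarith only [h2])
  have hgJder : ∀ y, HasDerivAt gJ (Real.exp (lam₁ * y) * lam₁ * (1 - M₂ * Real.exp (ε₂ * y))
      + Real.exp (lam₁ * y) * (-(M₂ * (Real.exp (ε₂ * y) * ε₂)))) y := by
    intro y
    exact (exp_mul_hasDerivAt lam₁ y).mul (((exp_mul_hasDerivAt ε₂ y).const_mul M₂).const_sub 1)
  have hImDiff : ∀ x, x ≠ ξ₂ → DifferentiableAt ℝ Iminus x := by
    intro x hx
    rw [hImeq]
    rcases hx.lt_or_gt with h | h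
    · exact ((ev_max_pos hgJcont (hgJpos x h)).differentiableAt_iff).2 (hgJder x).differentiableAt
    · exact ((ev_max_neg hgJcont (hgJneg x h)).differentiableAt_iff).2 (differentiableAt_const 0)
  have hexpξ₂ : Real.exp (ε₂ * ξ₂) = 1 / M₂ := by
    rw [hξ₂def, show ε₂ * (1 / ε₂ * Real.log (1 / M₂)) = Real.log (1 / M₂) from by field_simp]
    exact Real.exp_log (by positivity)
  have hImZero : ∀ y, ξ₂ ≤ y → Iminus y = 0 := by
    intro y hy
    rw [hIminus y]
    apply max_eq_right
    have h1 : 1 / M₂ ≤ Real.exp (ε₂ * y) := by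
      rw [← hexpξ₂]; exact Real.exp_le_exp.2 (mul_le_mul_of_nonneg_left hy hε₂.le)
    have h2 : 1 ≤ M₂ * Real.exp (ε₂ * y) := by
      rw [div_le_iff₀ (by positivity : (0:ℝ) < M₂)] at h1; rw [mul_comm]; linarith only [h1]
    exact mul_nonpos_of_nonneg_of_nonpos (Real.exp_pos _).le (by linarith only [h2])
  -- the peak of Iminus is at most I₀
  set ζp : ℝ := (1 / ε₂) * Real.log (lam₁ / ((lam₁ + ε₂) * M₂)) with hζpdef
  have hApos : (0:ℝ) < lam₁ / ((lam₁ + ε₂) * M₂) := by positivity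
  have hexpζp : Real.exp (ε₂ * ζp) = lam₁ / ((lam₁ + ε₂) * M₂) := by
    rw [hζpdef, show ε₂ * (1 / ε₂ * Real.log (lam₁ / ((lam₁ + ε₂) * M₂)))
      = Real.log (lam₁ / ((lam₁ + ε₂) * M₂)) from by field_simp]
    exact Real.exp_log hApos
  have hgJeq : ∀ y : ℝ, gJ y = Real.exp (lam₁ * y) - M₂ * Real.exp ((lam₁ + ε₂) * y) := by
    intro y
    show Real.exp (lam₁ * y) * (1 - M₂ * Real.exp (ε₂ * y)) = _
    rw [show (lam₁ + ε₂) * y = lam₁ * y + ε₂ * y from by ring, Real.exp_add]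
    ring
  have hPmax : ∀ x, Iminus x ≤ Iminus ζp := by
    intro x
    rw [hIminus x, hIminus ζp]
    refine max_le_max ?_ le_rfl
    have h1 : gJ x ≤ gJ ζp := by
      rw [hgJeq x, hgJeq ζp, hζpdef]
      exact hump_max hlam₁ hε₂ (by linarith only [hM₂]) x
    exact h1
  have hζpξ₂ : ζp < ξ₂ := by
    have hlt : lam₁ / ((lam₁ + ε₂) * M₂) < 1 / M₂ := by
      rw [div_lt_div_iff₀ (by positivity) (by positivity)]
      have h := mul_pos hε₂ (show (0:ℝ) < M₂ from by linarith only [hM₂])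
      linarith only [h]
    have hlog := Real.log_lt_log hApos hlt
    rw [hζpdef, hξ₂def]
    exact mul_lt_mul_of_pos_left hlog (by positivity)
  have hPpos : 0 < Iminus ζp := by
    rw [hIminus ζp, hexpζp]
    have h2 : (0:ℝ) < 1 - M₂ * (lam₁ / ((lam₁ + ε₂) * M₂)) := by
      rw [show M₂ * (lam₁ / ((lam₁ + ε₂) * M₂)) = lam₁ / (lam₁ + ε₂) from by field_simp]
      rw [sub_pos, div_lt_one (by linarith only [hlam₁, hε₂])]
      linarith only [hε₂]
    exact lt_max_of_lt_left (mul_pos (Real.exp_pos _) h2)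
  have hpeak0 : HasDerivAt Iminus 0 ζp := by
    have hpos : 0 < gJ ζp := hgJpos ζp hζpξ₂
    have hev : Iminus =ᶠ[nhds ζp] gJ := by
      rw [hImeq]; exact ev_max_pos hgJcont hpos
    have h0 := (hgJder ζp).congr_of_eventuallyEq hev
    have hval : Real.exp (lam₁ * ζp) * lam₁ * (1 - M₂ * Real.exp (ε₂ * ζp))
        + Real.exp (lam₁ * ζp) * (-(M₂ * (Real.exp (ε₂ * ζp) * ε₂))) = 0 := by
      have hne1 : lam₁ + ε₂ ≠ 0 := by positivity
      have hne2 : M₂ ≠ 0 := by positivity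
      rw [hexpζp]
      field_simp
      ring
    rwa [hval] at h0
  have hImI₀ : ∀ x, Iminus x ≤ I₀ := by
    intro x
    have hineqP := hIminusIneq ζp (ne_of_lt hζpξ₂)
    rw [hpeak0.deriv] at hineqP
    have hlapP : lap θ Iminus ζp ≤ 0 := by
      simp only [lap]
      linarith only [hPmax (ζp + Real.sin θ), hPmax (ζp - Real.sin θ),
        hPmax (ζp + Real.cos θ), hPmax (ζp - Real.cos θ)]
    have hden : (0:ℝ) < 1 + α * Iminus ζp := by
      have h := mul_pos hα hPpos; linarith only [h]
    have hnum : β * Sminus ζp * Iminus ζp ≤ β * S₀ * Iminus ζp :=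
      mul_le_mul_of_nonneg_right (mul_le_mul_of_nonneg_left (hSmS₀ ζp) hβ.le) hPpos.le
    have h2 : β * Sminus ζp * Iminus ζp / (1 + α * Iminus ζp)
        ≤ β * S₀ * Iminus ζp / (1 + α * Iminus ζp) := by gcongr
    have h1 : μ₂ * Iminus ζp ≤ β * S₀ * Iminus ζp / (1 + α * Iminus ζp) := by
      have hd2lap := mul_nonpos_of_nonneg_of_nonpos hd₂.le hlapP
      linarith only [hineqP, h2, hd2lap]
    have h4 : μ₂ * Iminus ζp * (1 + α * Iminus ζp) ≤ β * S₀ * Iminus ζp :=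
      (le_div_iff₀ hden).1 h1
    have h3 : μ₂ * (1 + α * Iminus ζp) ≤ β * S₀ := by
      by_contra hcon
      push_neg at hcon
      linarith only [mul_pos hPpos (sub_pos.2 hcon), h4]
    have h5 : Iminus ζp ≤ I₀ := by
      refine le_trans ?_ hI₀
      rw [le_div_iff₀ (by positivity)]
      linarith only [h3]
    exact (hPmax x).trans h5
  have hImIp : ∀ ζ, Iminus ζ ≤ Iplus ζ := fun ζ => by
    rw [hIplus ζ]; exact le_min (hImExp ζ) (hImI₀ ζ)
  -- comparisons with the extensions
  have hG1 : ∀ ζ, Sminus ζ ≤ φhat ζ ∧ φhat ζ ≤ S₀ := by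
    intro ζ
    rw [hφhat ζ]
    split_ifs with h1 h2
    · exact ⟨le_rfl, hSmS₀ ζ⟩
    · exact hφbd ζ ⟨not_lt.1 h1, h2⟩
    · have hXζ : X ≤ ζ := (not_le.1 h2).le
      exact ⟨(hSmAnti hXζ).trans (hφbd X hmemX).1, (hφbd X hmemX).2⟩
  have hG2 : ∀ ζ, Iminus ζ ≤ ψhat ζ ∧ ψhat ζ ≤ Iplus ζ := by
    intro ζ
    rw [hψhat ζ]
    split_ifs with h1 h2
    · exact ⟨le_rfl, hImIp ζ⟩
    · exact hψbd ζ ⟨not_lt.1 h1, h2⟩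
    · have hXζ : X ≤ ζ := (not_le.1 h2).le
      constructor
      · rw [hImZero ζ (by linarith only [hXζ, hξ₂neg, hX0])]
        exact (hIm0 X).trans (hψbd X hmemX).1
      · exact (hψbd X hmemX).2.trans (hIpMono hXζ)
  have hScont : ContinuousOn S (Icc (-X) X) := fun x hx => (hS x hx).continuousWithinAt
  have hIcont : ContinuousOn I (Icc (-X) X) := fun x hx => (hI x hx).continuousWithinAt
  -- bound 1 : Sminus ≤ S
  have hB1 : ∀ x ∈ Icc (-X) X, 0 ≤ S x - Sminus x := by
    refine gronwall_nonneg (c := c) (k := 4*d₁+μ₁+κ) (m := ξ₁)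
      (w := fun y => S y - Sminus y) hc0 (hScont.sub hSmCont.continuousOn) ?_ ?_
    · show 0 ≤ S (-X) - Sminus (-X)
      rw [hSinit]; simp
    · intro x hx hxm
      have hxIcc : x ∈ Icc (-X) X := Ioo_subset_Icc_self hx
      have hSd : HasDerivAt S (S' x) x := (hS x hxIcc).hasDerivAt (Icc_mem_nhds hx.1 hx.2)
      have hSmd : HasDerivAt Sminus (deriv Sminus x) x := (hSmDiff x hxm).hasDerivAt
      refine ⟨S' x - deriv Sminus x, hSd.sub hSmd, ?_⟩
      show 0 ≤ c * (S' x - deriv Sminus x) + (4*d₁+μ₁+κ) * (S x - Sminus x)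
      have heq := hSeq x hxIcc
      have hin := hSminusIneq x hxm
      simp only [lap] at hin
      have hbd := hφbd x hxIcc
      have hpsi := hψbd x hxIcc
      have hψ0 : 0 ≤ ψ x := (hIm0 x).trans hpsi.1
      have hlip := nl_lip hα hβ hκ (hSm0 x) hbd.1 hψ0 hpsi.2
      have m1 := mul_le_mul_of_nonneg_left (hG1 (x + Real.sin θ)).1 hd₁.le
      have m2 := mul_le_mul_of_nonneg_left (hG1 (x - Real.sin θ)).1 hd₁.le
      have m3 := mul_le_mul_of_nonneg_left (hG1 (x + Real.cos θ)).1 hd₁.le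
      have m4 := mul_le_mul_of_nonneg_left (hG1 (x - Real.cos θ)).1 hd₁.le
      linarith only [heq, hin, hlip, m1, m2, m3, m4]
  -- bound 2 : S ≤ S₀
  have hB2 : ∀ x ∈ Icc (-X) X, 0 ≤ S₀ - S x := by
    refine gronwall_nonneg (c := c) (k := 4*d₁+μ₁+κ) (m := X)
      (w := fun y => S₀ - S y) hc0 (continuousOn_const.sub hScont) ?_ ?_
    · show 0 ≤ S₀ - S (-X)
      rw [hSinit]; linarith only [hSmS₀ (-X)]
    · intro x hx _
      have hxIcc : x ∈ Icc (-X) X := Ioo_subset_Icc_self hx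
      have hSd : HasDerivAt S (S' x) x := (hS x hxIcc).hasDerivAt (Icc_mem_nhds hx.1 hx.2)
      refine ⟨-(S' x), hSd.const_sub S₀, ?_⟩
      show 0 ≤ c * (-(S' x)) + (4*d₁+μ₁+κ) * (S₀ - S x)
      have heq := hSeq x hxIcc
      have hbd := hφbd x hxIcc
      have hpsi := hψbd x hxIcc
      have hψ0 : 0 ≤ ψ x := (hIm0 x).trans hpsi.1
      have hφ0 : 0 ≤ φ x := (hSm0 x).trans hbd.1
      have hnn : 0 ≤ β * φ x * ψ x / (1 + α * ψ x) := by
        apply div_nonneg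
        · exact mul_nonneg (mul_nonneg hβ.le hφ0) hψ0
        · linarith only [mul_nonneg hα.le hψ0]
      have hκφ : κ * φ x ≤ κ * S₀ := mul_le_mul_of_nonneg_left hbd.2 hκ0.le
      have m1 := mul_le_mul_of_nonneg_left (hG1 (x + Real.sin θ)).2 hd₁.le
      have m2 := mul_le_mul_of_nonneg_left (hG1 (x - Real.sin θ)).2 hd₁.le
      have m3 := mul_le_mul_of_nonneg_left (hG1 (x + Real.cos θ)).2 hd₁.le
      have m4 := mul_le_mul_of_nonneg_left (hG1 (x - Real.cos θ)).2 hd₁.le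
      linarith only [heq, hnn, hκφ, m1, m2, m3, m4, hμ₁S₀]
  -- bound 3 : Iminus ≤ I
  have hB3 : ∀ x ∈ Icc (-X) X, 0 ≤ I x - Iminus x := by
    refine gronwall_nonneg (c := c) (k := 4*d₂+μ₂) (m := ξ₂)
      (w := fun y => I y - Iminus y) hc0 (hIcont.sub hImCont.continuousOn) ?_ ?_
    · show 0 ≤ I (-X) - Iminus (-X)
      rw [hIinit]; simp
    · intro x hx hxm
      have hxIcc : x ∈ Icc (-X) X := Ioo_subset_Icc_self hx
      have hId : HasDerivAt I (I' x) x := (hI x hxIcc).hasDerivAt (Icc_mem_nhds hx.1 hx.2)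
      have hImd : HasDerivAt Iminus (deriv Iminus x) x := (hImDiff x hxm).hasDerivAt
      refine ⟨I' x - deriv Iminus x, hId.sub hImd, ?_⟩
      show 0 ≤ c * (I' x - deriv Iminus x) + (4*d₂+μ₂) * (I x - Iminus x)
      have heq := hIeq x hxIcc
      have hin := hIminusIneq x hxm
      simp only [lap] at hin
      have hbd := hφbd x hxIcc
      have hpsi := hψbd x hxIcc
      have hmono := nl_mono (α := α) (s₁ := β * Sminus x) (s₂ := β * φ x)
        (t₁ := Iminus x) (t₂ := ψ x) hα (mul_nonneg hβ.le (hSm0 x)) (mul_le_mul_of_nonneg_left hbd.1 hβ.le)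
        (hIm0 x) hpsi.1
      have m1 := mul_le_mul_of_nonneg_left (hG2 (x + Real.sin θ)).1 hd₂.le
      have m2 := mul_le_mul_of_nonneg_left (hG2 (x - Real.sin θ)).1 hd₂.le
      have m3 := mul_le_mul_of_nonneg_left (hG2 (x + Real.cos θ)).1 hd₂.le
      have m4 := mul_le_mul_of_nonneg_left (hG2 (x - Real.cos θ)).1 hd₂.le
      linarith only [heq, hin, hmono, m1, m2, m3, m4]
  -- bound 4 : I ≤ Iplus
  have hB4 : ∀ x ∈ Icc (-X) X, 0 ≤ Iplus x - I x := by
    refine gronwall_nonneg (c := c) (k := 4*d₂+μ₂) (m := ξ₀)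
      (w := fun y => Iplus y - I y) hc0 (hIpCont.continuousOn.sub hIcont) ?_ ?_
    · show 0 ≤ Iplus (-X) - I (-X)
      rw [hIinit]; linarith only [hImIp (-X)]
    · intro x hx hxm
      have hxIcc : x ∈ Icc (-X) X := Ioo_subset_Icc_self hx
      have hId : HasDerivAt I (I' x) x := (hI x hxIcc).hasDerivAt (Icc_mem_nhds hx.1 hx.2)
      have hIpd : HasDerivAt Iplus (deriv Iplus x) x := (hIpDiff x hxm).hasDerivAt
      refine ⟨deriv Iplus x - I' x, hIpd.sub hId, ?_⟩
      show 0 ≤ c * (deriv Iplus x - I' x) + (4*d₂+μ₂) * (Iplus x - I x)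
      have heq := hIeq x hxIcc
      have hin := hIplusIneq x hxm
      simp only [lap] at hin
      have hbd := hφbd x hxIcc
      have hpsi := hψbd x hxIcc
      have hψ0 : 0 ≤ ψ x := (hIm0 x).trans hpsi.1
      have hφ0 : 0 ≤ φ x := (hSm0 x).trans hbd.1
      have hmono := nl_mono (α := α) (s₁ := β * φ x) (s₂ := β * S₀)
        (t₁ := ψ x) (t₂ := Iplus x) hα (mul_nonneg hβ.le hφ0)
        (mul_le_mul_of_nonneg_left hbd.2 hβ.le) hψ0 hpsi.2
      have m1 := mul_le_mul_of_nonneg_left (hG2 (x + Real.sin θ)).2 hd₂.le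
      have m2 := mul_le_mul_of_nonneg_left (hG2 (x - Real.sin θ)).2 hd₂.le
      have m3 := mul_le_mul_of_nonneg_left (hG2 (x + Real.cos θ)).2 hd₂.le
      have m4 := mul_le_mul_of_nonneg_left (hG2 (x - Real.cos θ)).2 hd₂.le
      linarith only [heq, hin, hmono, m1, m2, m3, m4]
  intro ξ hξ
  exact ⟨by linarith only [hB1 ξ hξ], by linarith only [hB2 ξ hξ],
    by linarith only [hB3 ξ hξ], by linarith only [hB4 ξ hξ]⟩
end
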